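/- arXiv:1403.5704 — 8 statements merged into one kernel-verified Lean document; each statement's English description precedes it below -/
import Mathlib

section
/- Let H₁ and H₂ be invertible Hermitian n×n complex matrices with H₁ ≤ H₂ (i.e. H₂ - H₁ is positive semidefinite). Then H₂⁻¹ ≤ H₁⁻¹ if and only if H₁ and H₂ have the same number of negative eigenvalues (counted with multiplicity). -/
open Matrix ComplexOrder
set_option linter.unusedSectionVars false
set_option maxHeartbeats 1000000


/-- Number of strictly negative eigenvalues (with multiplicity) of a matrix,
interpreted via its Hermitian spectral decomposition (0 if not Hermitian). -/
noncomputable def negCount {n : ℕ} (A : Matrix (Fin n) (Fin n) ℂ) : ℕ :=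
  if h : A.IsHermitian then Fintype.card {i // h.eigenvalues i < 0} else 0

/-- Number of strictly positive eigenvalues. -/
noncomputable def posCount {n : ℕ} (A : Matrix (Fin n) (Fin n) ℂ) : ℕ :=
  if h : A.IsHermitian then Fintype.card {i // 0 < h.eigenvalues i} else 0

/-- Number of nonpositive eigenvalues. -/
noncomputable def nonposCount {n : ℕ} (A : Matrix (Fin n) (Fin n) ℂ) : ℕ :=
  if h : A.IsHermitian then Fintype.card {i // h.eigenvalues i ≤ 0} else 0

/-- Number of nonnegative eigenvalues. -/
noncomputable def nonnegCount {n : ℕ} (A : Matrix (Fin n) (Fin n) ℂ) : ℕ :=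
  if h : A.IsHermitian then Fintype.card {i // 0 ≤ h.eigenvalues i} else 0

/-- Number of zero eigenvalues. -/
noncomputable def zeroCount {n : ℕ} (A : Matrix (Fin n) (Fin n) ℂ) : ℕ :=
  if h : A.IsHermitian then Fintype.card {i // h.eigenvalues i = 0} else 0

namespace Inertia

variable {ι κ κ₁ κ₂ : Type*} [Fintype ι] [Fintype κ] [Fintype κ₁] [Fintype κ₂]

/-- `f` certifies a negative-definite subspace for `A` of dimension `card κ`. -/
def IsNegCert (A : Matrix ι ι ℂ) (f : (κ → ℂ) →ₗ[ℂ] (ι → ℂ)) : Prop :=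
  Function.Injective f ∧ ∀ y, y ≠ 0 → star (f y) ⬝ᵥ A *ᵥ (f y) < 0

/-- `f` certifies a nonnegative subspace for `A` of dimension `card κ`. -/
def IsNonnegCert (A : Matrix ι ι ℂ) (f : (κ → ℂ) →ₗ[ℂ] (ι → ℂ)) : Prop :=
  Function.Injective f ∧ ∀ y, 0 ≤ star (f y) ⬝ᵥ A *ᵥ (f y)

noncomputable def negIdx [DecidableEq ι] {A : Matrix ι ι ℂ} (hA : A.IsHermitian) : ℕ :=
  Fintype.card {i // hA.eigenvalues i < 0}

noncomputable def nonnegIdx [DecidableEq ι] {A : Matrix ι ι ℂ} (hA : A.IsHermitian) : ℕ :=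
  Fintype.card {i // 0 ≤ hA.eigenvalues i}

lemma negIdx_add_nonnegIdx [DecidableEq ι] {A : Matrix ι ι ℂ} (hA : A.IsHermitian) :
    negIdx hA + nonnegIdx hA = Fintype.card ι := by
  classical
  rw [negIdx, nonnegIdx]
  have : ∀ i : ι, 0 ≤ hA.eigenvalues i ↔ ¬ hA.eigenvalues i < 0 := fun i => not_lt.symm
  rw [Fintype.card_congr (Equiv.subtypeEquivRight this), Fintype.card_subtype_compl]
  have hle : Fintype.card {i // hA.eigenvalues i < 0} ≤ Fintype.card ι :=
    Fintype.card_subtype_le _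
  omega

lemma quad_conj (A P : Matrix ι ι ℂ) (x : ι → ℂ) :
    star (P *ᵥ x) ⬝ᵥ A *ᵥ (P *ᵥ x) = star x ⬝ᵥ (Pᴴ * A * P) *ᵥ x := by
  rw [star_mulVec, mulVec_mulVec, dotProduct_mulVec, vecMul_vecMul, ← Matrix.mul_assoc,
    ← dotProduct_mulVec]

/-- extension by zero of a vector indexed by a subtype -/
noncomputable def extend (p : ι → Prop) [DecidablePred p] : ({i // p i} → ℂ) →ₗ[ℂ] (ι → ℂ) where
  toFun y i := if h : p i then y ⟨i, h⟩ else 0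
  map_add' y z := by funext i; by_cases h : p i <;> simp [h]
  map_smul' c y := by funext i; by_cases h : p i <;> simp [h]

lemma extend_apply (p : ι → Prop) [DecidablePred p] (y : {i // p i} → ℂ) (i : ι) :
    extend p y i = if h : p i then y ⟨i, h⟩ else 0 := rfl

lemma extend_injective (p : ι → Prop) [DecidablePred p] :
    Function.Injective (extend p) := by
  intro y z h
  funext j
  have := congrFun h j.1
  simpa [extend_apply, j.2] using this

/-- The master eigenvector certificate lemma. -/
lemma eigen_quad [DecidableEq ι] {A : Matrix ι ι ℂ} (hA : A.IsHermitian)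
    (p : ι → Prop) [DecidablePred p] :
    ∃ f : ({i // p i} → ℂ) →ₗ[ℂ] (ι → ℂ), Function.Injective f ∧
      ∀ y, star (f y) ⬝ᵥ A *ᵥ (f y) =
        ∑ i : ι, (if h : p i then ((hA.eigenvalues i : ℂ) * Complex.normSq (y ⟨i, h⟩)) else 0) := by
  classical
  set U : Matrix ι ι ℂ := (hA.eigenvectorUnitary : Matrix ι ι ℂ) with hU
  refine ⟨(Matrix.mulVecLin U).comp (extend p), ?_, ?_⟩
  · rw [LinearMap.coe_comp]
    apply Function.Injective.comp ?_ (extend_injective p)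
    intro a b hab
    have : (star U * U) *ᵥ a = (star U * U) *ᵥ b := by
      simp only [← Matrix.mulVec_mulVec]
      exact congrArg (star U *ᵥ ·) hab
    rwa [Unitary.coe_star_mul_self, Matrix.one_mulVec, Matrix.one_mulVec] at this
  · intro y
    have hUA : star U * A * U = diagonal (RCLike.ofReal ∘ hA.eigenvalues) :=
      (Unitary.conjStarAlgAut_star_apply (S := ℂ) _ _).symm.trans hA.conjStarAlgAut_star_eigenvectorUnitary
    have : star ((Matrix.mulVecLin U).comp (extend p) y) ⬝ᵥ A *ᵥ ((Matrix.mulVecLin U).comp (extend p) y)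
        = star (extend p y) ⬝ᵥ (diagonal (RCLike.ofReal ∘ hA.eigenvalues)) *ᵥ (extend p y) := by
      simp only [LinearMap.comp_apply, Matrix.mulVecLin_apply]
      rw [quad_conj, ← Matrix.star_eq_conjTranspose, hUA]
    rw [this, dotProduct]
    apply Finset.sum_congr rfl
    intro i _
    simp only [mulVec_diagonal, Pi.star_apply, extend_apply]
    by_cases h : p i
    · simp only [dif_pos h, Function.comp_apply]
      rw [show ((Complex.normSq (y ⟨i,h⟩) : ℝ) : ℂ) = star (y ⟨i,h⟩) * y ⟨i,h⟩ by
        rw [Complex.star_def, mul_comm, Complex.mul_conj]]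
      rw [mul_comm ((hA.eigenvalues i : ℂ)) _, ← mul_assoc, mul_right_comm]
      rfl
    · simp [dif_neg h]

lemma sum_dite_nonpos {F : ι → ℂ} (h : ∀ i, F i ≤ 0) (h2 : ∃ i, F i < 0) : ∑ i, F i < 0 := by
  obtain ⟨j, hj⟩ := h2
  calc ∑ i, F i < ∑ _i : ι, (0:ℂ) := Finset.sum_lt_sum (fun i _ => h i) ⟨j, Finset.mem_univ j, hj⟩
  _ = 0 := by simp

lemma exists_negCert [DecidableEq ι] {A : Matrix ι ι ℂ} (hA : A.IsHermitian)
    (p : ι → Prop) [DecidablePred p] (hp : ∀ i, p i → hA.eigenvalues i < 0) :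
    ∃ f : ({i // p i} → ℂ) →ₗ[ℂ] (ι → ℂ), IsNegCert A f := by
  obtain ⟨f, hinj, hq⟩ := eigen_quad hA p
  refine ⟨f, hinj, fun y hy => ?_⟩
  rw [hq]
  apply sum_dite_nonpos
  · intro i
    by_cases h : p i
    · simp only [dif_pos h]
      rw [← Complex.ofReal_mul]
      have : hA.eigenvalues i * Complex.normSq (y ⟨i, h⟩) ≤ 0 :=
        mul_nonpos_of_nonpos_of_nonneg (hp i h).le (Complex.normSq_nonneg _)
      exact_mod_cast this
    · simp [dif_neg h]
  · obtain ⟨j, hj⟩ := Function.ne_iff.mp hy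
    refine ⟨j.1, ?_⟩
    rw [dif_pos j.2]
    rw [← Complex.ofReal_mul]
    have : hA.eigenvalues j.1 * Complex.normSq (y j) < 0 := by
      have := hp j.1 j.2
      have h2 : 0 < Complex.normSq (y j) := by
        simpa [Complex.normSq_pos] using hj
      exact mul_neg_of_neg_of_pos this h2
    exact_mod_cast this

lemma exists_negCert_neg [DecidableEq ι] {A : Matrix ι ι ℂ} (hA : A.IsHermitian)
    (p : ι → Prop) [DecidablePred p] (hp : ∀ i, p i → 0 < hA.eigenvalues i) :
    ∃ f : ({i // p i} → ℂ) →ₗ[ℂ] (ι → ℂ), IsNegCert (-A) f := by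
  obtain ⟨f, hinj, hq⟩ := eigen_quad hA p
  refine ⟨f, hinj, fun y hy => ?_⟩
  have : star (f y) ⬝ᵥ (-A) *ᵥ (f y) = -(star (f y) ⬝ᵥ A *ᵥ (f y)) := by
    rw [Matrix.neg_mulVec, dotProduct_neg]
  rw [this, hq, neg_lt_zero]
  obtain ⟨j, hj⟩ := Function.ne_iff.mp hy
  calc (0:ℂ) = ∑ _i : ι, (0:ℂ) := by simp
  _ < _ := by
    apply Finset.sum_lt_sum
    · intro i _
      by_cases h : p i
      · simp only [dif_pos h]
        rw [← Complex.ofReal_mul]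
        have : 0 ≤ hA.eigenvalues i * Complex.normSq (y ⟨i, h⟩) :=
          mul_nonneg (hp i h).le (Complex.normSq_nonneg _)
        exact_mod_cast this
      · simp [dif_neg h]
    · refine ⟨j.1, Finset.mem_univ _, ?_⟩
      rw [dif_pos j.2, ← Complex.ofReal_mul]
      have h2 : 0 < Complex.normSq (y j) := by simpa [Complex.normSq_pos] using hj
      have : 0 < hA.eigenvalues j.1 * Complex.normSq (y j) := mul_pos (hp j.1 j.2) h2
      exact_mod_cast this

lemma exists_nonnegCert [DecidableEq ι] {A : Matrix ι ι ℂ} (hA : A.IsHermitian)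
    (p : ι → Prop) [DecidablePred p] (hp : ∀ i, p i → 0 ≤ hA.eigenvalues i) :
    ∃ f : ({i // p i} → ℂ) →ₗ[ℂ] (ι → ℂ), IsNonnegCert A f := by
  obtain ⟨f, hinj, hq⟩ := eigen_quad hA p
  refine ⟨f, hinj, fun y => ?_⟩
  rw [hq]
  apply Finset.sum_nonneg
  intro i _
  by_cases h : p i
  · simp only [dif_pos h]
    rw [← Complex.ofReal_mul]
    have : 0 ≤ hA.eigenvalues i * Complex.normSq (y ⟨i, h⟩) :=
      mul_nonneg (hp i h) (Complex.normSq_nonneg _)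
    exact_mod_cast this
  · simp [dif_neg h]

/-- Fundamental dimension bound: a negative certificate and a nonnegative certificate for the
same matrix have total dimension at most `card ι`. -/
lemma negCert_card_add_nonnegCert_card_le {A : Matrix ι ι ℂ}
    {f : (κ₁ → ℂ) →ₗ[ℂ] (ι → ℂ)} {g : (κ₂ → ℂ) →ₗ[ℂ] (ι → ℂ)}
    (hf : IsNegCert A f) (hg : IsNonnegCert A g) :
    Fintype.card κ₁ + Fintype.card κ₂ ≤ Fintype.card ι := by
  have hinj : Function.Injective (f.coprod g) := by
    rw [injective_iff_map_eq_zero]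
    rintro ⟨y, z⟩ hyz
    simp only [LinearMap.coprod_apply] at hyz
    have hy : y = 0 := by
      by_contra hy
      have h1 : star (f y) ⬝ᵥ A *ᵥ (f y) < 0 := hf.2 y hy
      have hfy : f y = g (-z) := by
        rw [map_neg]
        exact eq_neg_of_add_eq_zero_left hyz
      rw [hfy] at h1
      exact absurd (lt_of_le_of_lt (hg.2 (-z)) h1) (lt_irrefl _)
    subst hy
    simp only [map_zero, zero_add] at hyz
    have hz : z = 0 := by
      apply hg.1
      rw [hyz, map_zero]
    simp [hz]
  have := LinearMap.finrank_le_finrank_of_injective hinj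
  simpa [Module.finrank_prod] using this

lemma negCert_card_le [DecidableEq ι] {A : Matrix ι ι ℂ} (hA : A.IsHermitian)
    {f : (κ → ℂ) →ₗ[ℂ] (ι → ℂ)} (hf : IsNegCert A f) : Fintype.card κ ≤ negIdx hA := by
  classical
  obtain ⟨g, hg⟩ := exists_nonnegCert hA (fun i => 0 ≤ hA.eigenvalues i) (fun _ h => h)
  have h1 := negCert_card_add_nonnegCert_card_le hf hg
  have h2 := negIdx_add_nonnegIdx hA
  rw [show Fintype.card {i // 0 ≤ hA.eigenvalues i} = nonnegIdx hA from rfl] at h1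
  omega

lemma nonnegCert_card_le [DecidableEq ι] {A : Matrix ι ι ℂ} (hA : A.IsHermitian)
    {g : (κ → ℂ) →ₗ[ℂ] (ι → ℂ)} (hg : IsNonnegCert A g) : Fintype.card κ ≤ nonnegIdx hA := by
  classical
  obtain ⟨f, hf⟩ := exists_negCert hA (fun i => hA.eigenvalues i < 0) (fun _ h => h)
  have h1 := negCert_card_add_nonnegCert_card_le hf hg
  have h2 := negIdx_add_nonnegIdx hA
  rw [show Fintype.card {i // hA.eigenvalues i < 0} = negIdx hA from rfl] at h1
  omega

lemma exists_negCert_realize [DecidableEq ι] {A : Matrix ι ι ℂ} (hA : A.IsHermitian) :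
    ∃ f : ({i // hA.eigenvalues i < 0} → ℂ) →ₗ[ℂ] (ι → ℂ), IsNegCert A f :=
  exists_negCert hA _ (fun _ h => h)

lemma negIdx_congr [DecidableEq ι] {A B : Matrix ι ι ℂ} (hA : A.IsHermitian) (hB : B.IsHermitian)
    (h : A = B) : negIdx hA = negIdx hB := by subst h; rfl

/-- Monotonicity: if `B - A` is PSD then `B` has at most as many negative eigenvalues as `A`. -/
lemma negIdx_le_of_posSemidef_sub [DecidableEq ι] {A B : Matrix ι ι ℂ}
    (hA : A.IsHermitian) (hB : B.IsHermitian) (h : (B - A).PosSemidef) :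
    negIdx hB ≤ negIdx hA := by
  obtain ⟨f, hf⟩ := exists_negCert_realize hB
  have hfA : IsNegCert A f := by
    refine ⟨hf.1, fun y hy => ?_⟩
    have key : star (f y) ⬝ᵥ A *ᵥ (f y)
        = star (f y) ⬝ᵥ B *ᵥ (f y) - star (f y) ⬝ᵥ (B - A) *ᵥ (f y) := by
      rw [Matrix.sub_mulVec, dotProduct_sub]; ring
    rw [key]
    have h1 := hf.2 y hy
    have h2 := h.dotProduct_mulVec_nonneg (f y)
    calc star (f y) ⬝ᵥ B *ᵥ (f y) - star (f y) ⬝ᵥ (B - A) *ᵥ (f y)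
        ≤ star (f y) ⬝ᵥ B *ᵥ (f y) := sub_le_self _ h2
    _ < 0 := h1
  exact negCert_card_le hA hfA

lemma negIdx_le_inv [DecidableEq ι] {A : Matrix ι ι ℂ} (hA : A.IsHermitian)
    (hAi : (A⁻¹).IsHermitian) (hu : IsUnit A) : negIdx hA ≤ negIdx hAi := by
  obtain ⟨f, hf⟩ := exists_negCert_realize hA
  have hdet : IsUnit A.det := (Matrix.isUnit_iff_isUnit_det A).mp hu
  have h1 : A⁻¹ * A = 1 := Matrix.nonsing_inv_mul A hdet
  have hcert : IsNegCert A⁻¹ ((Matrix.mulVecLin A).comp f) := by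
    constructor
    · rw [LinearMap.coe_comp]
      refine Function.Injective.comp ?_ hf.1
      exact Matrix.mulVec_injective_iff_isUnit.mpr hu
    · intro y hy
      simp only [LinearMap.comp_apply, Matrix.mulVecLin_apply]
      have : star (A *ᵥ f y) ⬝ᵥ A⁻¹ *ᵥ (A *ᵥ f y) = star (f y) ⬝ᵥ A *ᵥ (f y) := by
        rw [Matrix.mulVec_mulVec, h1, Matrix.one_mulVec, star_mulVec,
          ← dotProduct_mulVec, hA.eq]
      rw [this]
      exact hf.2 y hy
  exact negCert_card_le hAi hcert

lemma negIdx_inv [DecidableEq ι] {A : Matrix ι ι ℂ} (hA : A.IsHermitian)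
    (hAi : (A⁻¹).IsHermitian) (hu : IsUnit A) : negIdx hAi = negIdx hA := by
  refine le_antisymm ?_ (negIdx_le_inv hA hAi hu)
  have hinvinv : (A⁻¹⁻¹).IsHermitian := by
    rw [Matrix.nonsing_inv_nonsing_inv A ((Matrix.isUnit_iff_isUnit_det A).mp hu)]
    exact hA
  have hui : IsUnit (A⁻¹) := (Matrix.isUnit_nonsing_inv_iff).mpr hu
  have := negIdx_le_inv hAi hinvinv hui
  calc negIdx hAi ≤ negIdx hinvinv := this
  _ = negIdx hA := negIdx_congr _ _ (Matrix.nonsing_inv_nonsing_inv A ((Matrix.isUnit_iff_isUnit_det A).mp hu))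

lemma negIdx_le_conj [DecidableEq ι] {A : Matrix ι ι ℂ} (hA : A.IsHermitian)
    {E : Matrix ι ι ℂ} (hE : IsUnit E) (hE' : (Eᴴ * A * E).IsHermitian) :
    negIdx hA ≤ negIdx hE' := by
  obtain ⟨f, hf⟩ := exists_negCert_realize hA
  have hdet : IsUnit E.det := (Matrix.isUnit_iff_isUnit_det E).mp hE
  have h1 : E * E⁻¹ = 1 := Matrix.mul_nonsing_inv E hdet
  have h2 : (E⁻¹)ᴴ * Eᴴ = 1 := by rw [← Matrix.conjTranspose_mul, h1, Matrix.conjTranspose_one]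
  have key : (E⁻¹)ᴴ * (Eᴴ * A * E) * E⁻¹ = A := by
    calc (E⁻¹)ᴴ * (Eᴴ * A * E) * E⁻¹ = ((E⁻¹)ᴴ * Eᴴ) * A * (E * E⁻¹) := by
          simp only [Matrix.mul_assoc]
    _ = A := by rw [h1, h2, Matrix.one_mul, Matrix.mul_one]
  have hcert : IsNegCert (Eᴴ * A * E) ((Matrix.mulVecLin E⁻¹).comp f) := by
    constructor
    · rw [LinearMap.coe_comp]
      refine Function.Injective.comp ?_ hf.1
      exact Matrix.mulVec_injective_iff_isUnit.mpr ((Matrix.isUnit_nonsing_inv_iff).mpr hE)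
    · intro y hy
      simp only [LinearMap.comp_apply, Matrix.mulVecLin_apply]
      rw [quad_conj, key]
      exact hf.2 y hy
  exact negCert_card_le hE' hcert

lemma negIdx_conj [DecidableEq ι] {A : Matrix ι ι ℂ} (hA : A.IsHermitian)
    {E : Matrix ι ι ℂ} (hE : IsUnit E) (hE' : (Eᴴ * A * E).IsHermitian) :
    negIdx hE' = negIdx hA := by
  refine le_antisymm ?_ (negIdx_le_conj hA hE hE')
  have hdet : IsUnit E.det := (Matrix.isUnit_iff_isUnit_det E).mp hE
  have h1 : E * E⁻¹ = 1 := Matrix.mul_nonsing_inv E hdet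
  have h2 : (E⁻¹)ᴴ * Eᴴ = 1 := by rw [← Matrix.conjTranspose_mul, h1, Matrix.conjTranspose_one]
  have key : (E⁻¹)ᴴ * (Eᴴ * A * E) * E⁻¹ = A := by
    calc (E⁻¹)ᴴ * (Eᴴ * A * E) * E⁻¹ = ((E⁻¹)ᴴ * Eᴴ) * A * (E * E⁻¹) := by
          simp only [Matrix.mul_assoc]
    _ = A := by rw [h1, h2, Matrix.one_mul, Matrix.mul_one]
  have hA' : ((E⁻¹)ᴴ * (Eᴴ * A * E) * E⁻¹).IsHermitian := by rw [key]; exact hA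
  have := negIdx_le_conj hE' ((Matrix.isUnit_nonsing_inv_iff).mpr hE) hA'
  calc negIdx hE' ≤ negIdx hA' := this
  _ = negIdx hA := negIdx_congr _ _ key

section Blocks

variable [DecidableEq ι] [DecidableEq κ]

lemma fromBlocks_quad (A : Matrix ι ι ℂ) (D : Matrix κ κ ℂ) (u : ι → ℂ) (v : κ → ℂ) :
    star (Sum.elim u v) ⬝ᵥ (Matrix.fromBlocks A 0 0 D) *ᵥ (Sum.elim u v)
      = star u ⬝ᵥ A *ᵥ u + star v ⬝ᵥ D *ᵥ v := by
  rw [Function.star_sumElim, Matrix.fromBlocks_mulVec]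
  simp only [Matrix.zero_mulVec, add_zero, zero_add]
  rw [sumElim_dotProduct_sumElim]
  simp [Sum.elim_comp_inl, Sum.elim_comp_inr]

/-- combine two linear maps into one on the sum type -/
def sumMap (f : (κ₁ → ℂ) →ₗ[ℂ] (ι → ℂ)) (g : (κ₂ → ℂ) →ₗ[ℂ] (κ → ℂ)) :
    ((κ₁ ⊕ κ₂) → ℂ) →ₗ[ℂ] ((ι ⊕ κ) → ℂ) where
  toFun y := Sum.elim (f (y ∘ Sum.inl)) (g (y ∘ Sum.inr))
  map_add' y z := by
    have h1 : (y + z) ∘ Sum.inl = y ∘ Sum.inl + z ∘ Sum.inl := rfl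
    have h2 : (y + z) ∘ Sum.inr = y ∘ Sum.inr + z ∘ Sum.inr := rfl
    show Sum.elim (f ((y + z) ∘ Sum.inl)) (g ((y + z) ∘ Sum.inr)) = _
    rw [h1, h2, map_add, map_add]
    funext i
    cases i <;> simp
  map_smul' c y := by
    have h1 : (c • y) ∘ Sum.inl = c • (y ∘ Sum.inl) := rfl
    have h2 : (c • y) ∘ Sum.inr = c • (y ∘ Sum.inr) := rfl
    show Sum.elim (f ((c • y) ∘ Sum.inl)) (g ((c • y) ∘ Sum.inr)) = _
    rw [h1, h2, _root_.map_smul, _root_.map_smul]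
    funext i
    cases i <;> simp

lemma sumMap_apply (f : (κ₁ → ℂ) →ₗ[ℂ] (ι → ℂ)) (g : (κ₂ → ℂ) →ₗ[ℂ] (κ → ℂ)) (y) :
    sumMap f g y = Sum.elim (f (y ∘ Sum.inl)) (g (y ∘ Sum.inr)) := rfl

lemma sumMap_injective {f : (κ₁ → ℂ) →ₗ[ℂ] (ι → ℂ)} {g : (κ₂ → ℂ) →ₗ[ℂ] (κ → ℂ)}
    (hf : Function.Injective f) (hg : Function.Injective g) :
    Function.Injective (sumMap f g) := by
  rw [injective_iff_map_eq_zero]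
  intro y hy
  have h1 : f (y ∘ Sum.inl) = 0 := by
    funext i; exact congrFun hy (Sum.inl i)
  have h2 : g (y ∘ Sum.inr) = 0 := by
    funext i; exact congrFun hy (Sum.inr i)
  have hy1 : y ∘ Sum.inl = 0 := by
    apply hf; rw [h1, map_zero]
  have hy2 : y ∘ Sum.inr = 0 := by
    apply hg; rw [h2, map_zero]
  funext i
  cases i with
  | inl i => exact congrFun hy1 i
  | inr i => exact congrFun hy2 i

lemma IsNegCert.sumMap {A : Matrix ι ι ℂ} {D : Matrix κ κ ℂ}
    {f : (κ₁ → ℂ) →ₗ[ℂ] (ι → ℂ)} {g : (κ₂ → ℂ) →ₗ[ℂ] (κ → ℂ)}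
    (hf : IsNegCert A f) (hg : IsNegCert D g) :
    IsNegCert (Matrix.fromBlocks A 0 0 D) (Inertia.sumMap f g) := by
  refine ⟨sumMap_injective hf.1 hg.1, fun y hy => ?_⟩
  rw [sumMap_apply, fromBlocks_quad]
  have hne : y ∘ Sum.inl ≠ 0 ∨ y ∘ Sum.inr ≠ 0 := by
    by_contra h
    push_neg at h
    apply hy
    funext i
    cases i with
    | inl i => exact congrFun h.1 i
    | inr i => exact congrFun h.2 i
  have hq1 : star (f (y ∘ Sum.inl)) ⬝ᵥ A *ᵥ (f (y ∘ Sum.inl)) ≤ 0 := by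
    by_cases h : y ∘ Sum.inl = 0
    · rw [h, map_zero]; simp
    · exact (hf.2 _ h).le
  have hq2 : star (g (y ∘ Sum.inr)) ⬝ᵥ D *ᵥ (g (y ∘ Sum.inr)) ≤ 0 := by
    by_cases h : y ∘ Sum.inr = 0
    · rw [h, map_zero]; simp
    · exact (hg.2 _ h).le
  rcases hne with h | h
  · exact add_neg_of_neg_of_nonpos (hf.2 _ h) hq2
  · exact add_neg_of_nonpos_of_neg hq1 (hg.2 _ h)

lemma IsNonnegCert.sumMap {A : Matrix ι ι ℂ} {D : Matrix κ κ ℂ}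
    {f : (κ₁ → ℂ) →ₗ[ℂ] (ι → ℂ)} {g : (κ₂ → ℂ) →ₗ[ℂ] (κ → ℂ)}
    (hf : IsNonnegCert A f) (hg : IsNonnegCert D g) :
    IsNonnegCert (Matrix.fromBlocks A 0 0 D) (Inertia.sumMap f g) := by
  refine ⟨sumMap_injective hf.1 hg.1, fun y => ?_⟩
  rw [sumMap_apply, fromBlocks_quad]
  exact add_nonneg (hf.2 _) (hg.2 _)

lemma negIdx_fromBlocks {A : Matrix ι ι ℂ} {D : Matrix κ κ ℂ}
    (hA : A.IsHermitian) (hD : D.IsHermitian)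
    (hblk : (Matrix.fromBlocks A 0 0 D).IsHermitian) :
    negIdx hblk = negIdx hA + negIdx hD := by
  classical
  -- lower bound
  obtain ⟨f, hf⟩ := exists_negCert_realize hA
  obtain ⟨g, hg⟩ := exists_negCert_realize hD
  have hlow : negIdx hA + negIdx hD ≤ negIdx hblk := by
    have := negCert_card_le hblk (hf.sumMap hg)
    simpa [Fintype.card_sum, negIdx] using this
  -- upper bound via nonneg certificates
  obtain ⟨f', hf'⟩ := exists_nonnegCert hA (fun i => 0 ≤ hA.eigenvalues i) (fun _ h => h)
  obtain ⟨g', hg'⟩ := exists_nonnegCert hD (fun i => 0 ≤ hD.eigenvalues i) (fun _ h => h)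
  have hup : nonnegIdx hA + nonnegIdx hD ≤ nonnegIdx hblk := by
    have := nonnegCert_card_le hblk (hf'.sumMap hg')
    simpa [Fintype.card_sum, nonnegIdx] using this
  have c1 := negIdx_add_nonnegIdx hA
  have c2 := negIdx_add_nonnegIdx hD
  have c3 := negIdx_add_nonnegIdx hblk
  rw [Fintype.card_sum] at c3
  omega

end Blocks

lemma negIdx_neg_one [DecidableEq ι] (h : (-1 : Matrix ι ι ℂ).IsHermitian) :
    negIdx h = Fintype.card ι := by
  refine le_antisymm (Fintype.card_subtype_le _) ?_
  have hcert : IsNegCert (-1 : Matrix ι ι ℂ) (LinearMap.id : (ι → ℂ) →ₗ[ℂ] (ι → ℂ)) := by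
    refine ⟨fun a b hab => hab, fun y hy => ?_⟩
    simp only [LinearMap.id_coe, id_eq]
    rw [Matrix.neg_mulVec, Matrix.one_mulVec, dotProduct_neg, neg_lt_zero]
    exact Matrix.dotProduct_star_self_pos_iff.mpr hy
  exact negCert_card_le h hcert

lemma eigenvalues_ne_zero [DecidableEq ι] {M : Matrix ι ι ℂ} (hM : M.IsHermitian)
    (hu : IsUnit M) (i : ι) : hM.eigenvalues i ≠ 0 := by
  intro h0
  have hdet : M.det = 0 := by
    rw [hM.det_eq_prod_eigenvalues]
    apply Finset.prod_eq_zero (Finset.mem_univ i)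
    rw [h0]; simp
  have := (Matrix.isUnit_iff_isUnit_det M).mp hu
  rw [hdet] at this
  simp at this

lemma negIdx_add_negIdx_neg [DecidableEq ι] {M : Matrix ι ι ℂ} (hM : M.IsHermitian)
    (hMn : (-M).IsHermitian) (hu : IsUnit M) :
    negIdx hM + negIdx hMn = Fintype.card ι := by
  classical
  have hle : negIdx hM + negIdx hMn ≤ Fintype.card ι := by
    obtain ⟨f, hf⟩ := exists_negCert_realize hM
    obtain ⟨g, hg⟩ := exists_negCert_realize hMn
    have hgnn : IsNonnegCert M g := by
      refine ⟨hg.1, fun z => ?_⟩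
      by_cases h : z = 0
      · rw [h, map_zero]; simp
      · have := hg.2 z h
        rw [Matrix.neg_mulVec, dotProduct_neg, neg_lt_zero] at this
        exact this.le
    exact negCert_card_add_nonnegCert_card_le hf hgnn
  have hge : Fintype.card ι ≤ negIdx hM + negIdx hMn := by
    obtain ⟨g, hg⟩ := exists_negCert_neg hM (fun i => 0 ≤ hM.eigenvalues i)
      (fun i h => lt_of_le_of_ne h (Ne.symm (eigenvalues_ne_zero hM hu i)))
    have h1 : Fintype.card {i // 0 ≤ hM.eigenvalues i} ≤ negIdx hMn := negCert_card_le hMn hg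
    have h2 := negIdx_add_nonnegIdx hM
    rw [show Fintype.card {i // 0 ≤ hM.eigenvalues i} = nonnegIdx hM from rfl] at h1
    omega
  omega

lemma posDef_of_negIdx_eq_zero [DecidableEq ι] {M : Matrix ι ι ℂ} (hM : M.IsHermitian)
    (hu : IsUnit M) (h : negIdx hM = 0) : M.PosDef := by
  have hempty : IsEmpty {i // hM.eigenvalues i < 0} := Fintype.card_eq_zero_iff.mp h
  have hnn : ∀ i, 0 ≤ hM.eigenvalues i := by
    intro i
    by_contra hc
    exact hempty.false ⟨i, not_le.mp hc⟩
  have hpsd : M.PosSemidef := hM.posSemidef_iff_eigenvalues_nonneg.mpr hnn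
  refine PosDef.of_dotProduct_mulVec_pos hM fun x hx => ?_
  have h1 := hpsd.dotProduct_mulVec_nonneg x
  rcases lt_or_eq_of_le h1 with h2 | h2
  · exact h2
  · exfalso
    have h3 : M *ᵥ x = 0 := (hpsd.dotProduct_mulVec_zero_iff x).mp h2.symm
    have h4 : x = 0 := by
      have hinj := Matrix.mulVec_injective_iff_isUnit.mpr hu
      apply hinj
      rw [h3, Matrix.mulVec_zero]
    exact hx h4

end Inertia

open Inertia in
lemma negCount_eq {n : ℕ} {A : Matrix (Fin n) (Fin n) ℂ} (hA : A.IsHermitian) :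
    negCount A = negIdx hA := by
  rw [negCount, dif_pos hA]; rfl

open Inertia in
theorem antitonicity_matrices {n : ℕ} (H₁ H₂ : Matrix (Fin n) (Fin n) ℂ)
    (h1 : H₁.IsHermitian) (h2 : H₂.IsHermitian)
    (hu1 : IsUnit H₁) (hu2 : IsUnit H₂)
    (hle : (H₂ - H₁).PosSemidef) :
    (H₁⁻¹ - H₂⁻¹).PosSemidef ↔ negCount H₁ = negCount H₂ := by
  have hdet1 : IsUnit H₁.det := (Matrix.isUnit_iff_isUnit_det H₁).mp hu1
  have hdet2 : IsUnit H₂.det := (Matrix.isUnit_iff_isUnit_det H₂).mp hu2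
  rw [negCount_eq h1, negCount_eq h2]
  constructor
  · -- easy direction
    intro hinv
    have e1 : negIdx h2 ≤ negIdx h1 := negIdx_le_of_posSemidef_sub h1 h2 hle
    have e2 : negIdx h1.inv ≤ negIdx h2.inv := negIdx_le_of_posSemidef_sub h2.inv h1.inv hinv
    have e3 : negIdx h1.inv = negIdx h1 := negIdx_inv h1 h1.inv hu1
    have e4 : negIdx h2.inv = negIdx h2 := negIdx_inv h2 h2.inv hu2
    omega
  · -- hard direction
    intro hcount
    set C : Matrix (Fin n) (Fin n) ℂ := (open scoped MatrixOrder in CFC.sqrt (H₂ - H₁)) with hCdef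
    have hCps : C.PosSemidef := open scoped MatrixOrder in Matrix.nonneg_iff_posSemidef.mp (CFC.sqrt_nonneg _)
    have hCh : C.IsHermitian := hCps.1
    have hCC : C * C = H₂ - H₁ := open scoped MatrixOrder in CFC.sqrt_mul_sqrt_self _ hle.nonneg
    have hB : H₂ = H₁ + C * C := by rw [hCC]; noncomm_ring
    set M : Matrix (Fin n) (Fin n) ℂ := 1 + C * H₁⁻¹ * C with hMdef
    have hMh : M.IsHermitian := by
      apply Matrix.isHermitian_one.add
      have : C * H₁⁻¹ * C = Cᴴ * H₁⁻¹ * C := by rw [hCh]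
      rw [this]
      exact Matrix.isHermitian_conjTranspose_mul_mul C h1.inv
    -- the block matrices
    set X : Matrix (Fin n ⊕ Fin n) (Fin n ⊕ Fin n) ℂ := Matrix.fromBlocks H₁ C C (-1) with hXdef
    set D1 : Matrix (Fin n ⊕ Fin n) (Fin n ⊕ Fin n) ℂ := Matrix.fromBlocks H₁ 0 0 (-M) with hD1def
    set D2 : Matrix (Fin n ⊕ Fin n) (Fin n ⊕ Fin n) ℂ := Matrix.fromBlocks H₂ 0 0 (-1) with hD2def
    set E : Matrix (Fin n ⊕ Fin n) (Fin n ⊕ Fin n) ℂ := Matrix.fromBlocks 1 (H₁⁻¹ * C) 0 1 with hEdef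
    set G : Matrix (Fin n ⊕ Fin n) (Fin n ⊕ Fin n) ℂ := Matrix.fromBlocks 1 0 (-C) 1 with hGdef
    have hAC : H₁ * (H₁⁻¹ * C) = C := by
      rw [← Matrix.mul_assoc, Matrix.mul_nonsing_inv H₁ hdet1, Matrix.one_mul]
    have hCA : C * H₁⁻¹ * H₁ = C := by
      rw [Matrix.mul_assoc, Matrix.nonsing_inv_mul H₁ hdet1, Matrix.mul_one]
    have hEt : Eᴴ = Matrix.fromBlocks 1 0 (C * H₁⁻¹) 1 := by
      rw [hEdef, Matrix.fromBlocks_conjTranspose, Matrix.conjTranspose_zero,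
        Matrix.conjTranspose_one, Matrix.conjTranspose_mul, h1.inv, hCh]
    have hGt : Gᴴ = Matrix.fromBlocks 1 (-C) 0 1 := by
      rw [hGdef, Matrix.fromBlocks_conjTranspose, Matrix.conjTranspose_zero,
        Matrix.conjTranspose_one, Matrix.conjTranspose_neg, hCh]
    have hid1 : Eᴴ * D1 * E = X := by
      rw [hEt, hD1def, hXdef, Matrix.fromBlocks_multiply, Matrix.fromBlocks_multiply,
        Matrix.fromBlocks_inj]
      refine ⟨by noncomm_ring, ?_, ?_, ?_⟩
      · simp only [Matrix.mul_one, Matrix.one_mul, Matrix.mul_zero, Matrix.zero_mul,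
          add_zero, zero_add]
        exact hAC
      · simp only [Matrix.mul_one, Matrix.one_mul, Matrix.mul_zero, Matrix.zero_mul,
          add_zero, zero_add]
        exact hCA
      · simp only [Matrix.mul_one, Matrix.one_mul, Matrix.mul_zero, Matrix.zero_mul,
          add_zero, zero_add, hCA]
        rw [hMdef]
        noncomm_ring
    have hid2 : Gᴴ * D2 * G = X := by
      rw [hGt, hD2def, hXdef, Matrix.fromBlocks_multiply, Matrix.fromBlocks_multiply,
        Matrix.fromBlocks_inj]
      refine ⟨?_, by noncomm_ring, by noncomm_ring, by noncomm_ring⟩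
      rw [hB]
      noncomm_ring
    have hXh : X.IsHermitian := by
      rw [← hid2]
      exact Matrix.isHermitian_conjTranspose_mul_mul G
        (Matrix.IsHermitian.fromBlocks h2 (by simp) Matrix.isHermitian_one.neg)
    have hD1h : D1.IsHermitian :=
      Matrix.IsHermitian.fromBlocks h1 (by simp) hMh.neg
    have hD2h : D2.IsHermitian :=
      Matrix.IsHermitian.fromBlocks h2 (by simp) Matrix.isHermitian_one.neg
    have hEu : IsUnit E := by
      rw [Matrix.isUnit_iff_isUnit_det, hEdef, Matrix.det_fromBlocks_zero₂₁]
      simp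
    have hGu : IsUnit G := by
      rw [Matrix.isUnit_iff_isUnit_det, hGdef, Matrix.det_fromBlocks_zero₁₂]
      simp
    have hneg1u : IsUnit (-1 : Matrix (Fin n) (Fin n) ℂ) := isUnit_one.neg
    have hXu : IsUnit X := by
      rw [← hid2]
      have hGtu : IsUnit (Gᴴ) := by
        rw [Matrix.isUnit_iff_isUnit_det, Matrix.det_conjTranspose]
        exact ((Matrix.isUnit_iff_isUnit_det G).mp hGu).star
      have hD2u : IsUnit D2 := by
        rw [Matrix.isUnit_iff_isUnit_det, hD2def, Matrix.det_fromBlocks_zero₂₁]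
        exact hdet2.mul ((Matrix.isUnit_iff_isUnit_det _).mp hneg1u)
      exact (hGtu.mul hD2u).mul hGu
    have hMu : IsUnit M := by
      have hdX : IsUnit X.det := (Matrix.isUnit_iff_isUnit_det X).mp hXu
      rw [← hid1, Matrix.det_mul, Matrix.det_mul] at hdX
      have hdD1 : IsUnit D1.det := by
        rcases (IsUnit.mul_iff.mp hdX).1 with h
        exact (IsUnit.mul_iff.mp h).2
      rw [hD1def, Matrix.det_fromBlocks_zero₂₁] at hdD1
      have hnMu : IsUnit (-M) := by
        rw [Matrix.isUnit_iff_isUnit_det]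
        exact (IsUnit.mul_iff.mp hdD1).2
      have := hnMu.neg
      rwa [neg_neg] at this
    -- inertia computations
    have hconj1 : (Eᴴ * D1 * E).IsHermitian := by rw [hid1]; exact hXh
    have hconj2 : (Gᴴ * D2 * G).IsHermitian := by rw [hid2]; exact hXh
    have q1 : negIdx hXh = negIdx h1 + negIdx hMh.neg := by
      have a1 : negIdx hconj1 = negIdx hD1h := negIdx_conj hD1h hEu hconj1
      have a2 : negIdx hconj1 = negIdx hXh := negIdx_congr _ _ hid1
      have a3 : negIdx hD1h = negIdx h1 + negIdx hMh.neg := negIdx_fromBlocks h1 hMh.neg hD1h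
      omega
    have hneg1h : (-1 : Matrix (Fin n) (Fin n) ℂ).IsHermitian := Matrix.isHermitian_one.neg
    have q2 : negIdx hXh = negIdx h2 + n := by
      have a1 : negIdx hconj2 = negIdx hD2h := negIdx_conj hD2h hGu hconj2
      have a2 : negIdx hconj2 = negIdx hXh := negIdx_congr _ _ hid2
      have a3 : negIdx hD2h = negIdx h2 + negIdx hneg1h := negIdx_fromBlocks h2 hneg1h hD2h
      have a4 : negIdx hneg1h = n := by rw [negIdx_neg_one hneg1h, Fintype.card_fin]
      omega
    have q3 : negIdx hMh + negIdx hMh.neg = n := by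
      have := negIdx_add_negIdx_neg hMh hMh.neg hMu
      rwa [Fintype.card_fin] at this
    have hM0 : negIdx hMh = 0 := by omega
    have hMpd : M.PosDef := posDef_of_negIdx_eq_zero hMh hMu hM0
    have hMipd : (M⁻¹).PosDef := hMpd.inv
    -- Woodbury
    have hMinvM : M⁻¹ * M = 1 := Matrix.nonsing_inv_mul M ((Matrix.isUnit_iff_isUnit_det M).mp hMu)
    have hAB : H₁⁻¹ * H₂ = 1 + H₁⁻¹ * (C * C) := by
      rw [hB, Matrix.mul_add, Matrix.nonsing_inv_mul H₁ hdet1]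
    have e0 : C * (H₁⁻¹ * H₂) = M * C := by
      rw [hAB, hMdef]; noncomm_ring
    have e1 : M⁻¹ * (C * (H₁⁻¹ * H₂)) = C := by
      rw [e0, ← Matrix.mul_assoc, hMinvM, Matrix.one_mul]
    have hwood : (H₁⁻¹ - H₁⁻¹ * C * M⁻¹ * C * H₁⁻¹) * H₂ = 1 := by
      calc (H₁⁻¹ - H₁⁻¹ * C * M⁻¹ * C * H₁⁻¹) * H₂
          = H₁⁻¹ * H₂ - H₁⁻¹ * (C * (M⁻¹ * (C * (H₁⁻¹ * H₂)))) := by noncomm_ring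
        _ = 1 + H₁⁻¹ * (C * C) - H₁⁻¹ * (C * C) := by rw [e1, hAB]
        _ = 1 := by noncomm_ring
    have hBinv : H₂⁻¹ = H₁⁻¹ - H₁⁻¹ * C * M⁻¹ * C * H₁⁻¹ := Matrix.inv_eq_left_inv hwood
    have hdiff : H₁⁻¹ - H₂⁻¹ = (C * H₁⁻¹)ᴴ * M⁻¹ * (C * H₁⁻¹) := by
      rw [hBinv, Matrix.conjTranspose_mul, h1.inv, hCh]
      noncomm_ring
    rw [hdiff]
    exact hMipd.posSemidef.conjTranspose_mul_mul_same (C * H₁⁻¹)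
end

section
/- Let H₁ and H₂ be invertible Hermitian n×n complex matrices with H₁ ≤ H₂. If H₂⁻¹ ≤ H₁⁻¹, then H₁ and H₂ have the same number of negative eigenvalues. -/
open Matrix ComplexOrder

section Aux

variable {n : ℕ}

/-- The span of the columns of `U` indexed by indices satisfying `P`. -/
noncomputable def colSpan (U : Matrix (Fin n) (Fin n) ℂ) (P : Fin n → Prop) :
    Submodule ℂ (Fin n → ℂ) :=
  Submodule.span ℂ (Set.range (fun i : {i // P i} => Uᵀ (i : Fin n)))

lemma finrank_colSpan {U : Matrix (Fin n) (Fin n) ℂ} (hU : IsUnit U) (P : Fin n → Prop)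
    [Fintype {i // P i}] : Module.finrank ℂ (colSpan U P) = Fintype.card {i // P i} := by
  have hli : LinearIndependent ℂ (fun i : {i // P i} => Uᵀ (i : Fin n)) :=
    (Matrix.linearIndependent_cols_iff_isUnit.mpr hU).comp _ Subtype.val_injective
  exact finrank_span_eq_card hli

lemma mem_colSpan_apply_eq_zero {U : Matrix (Fin n) (Fin n) ℂ}
    (hU : star U * U = 1) {P : Fin n → Prop} {x : Fin n → ℂ}
    (hx : x ∈ colSpan U P) {j : Fin n} (hj : ¬ P j) : (star U *ᵥ x) j = 0 := by
  classical
  have hle : colSpan U P ≤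
      LinearMap.ker ((LinearMap.proj j).comp (Matrix.mulVecLin (star U))) := by
    rw [colSpan, Submodule.span_le]
    rintro _ ⟨i, rfl⟩
    simp only [SetLike.mem_coe, LinearMap.mem_ker, LinearMap.comp_apply,
      Matrix.mulVecLin_apply, LinearMap.proj_apply]
    have hcol : Uᵀ (i : Fin n) = U *ᵥ Pi.single (i : Fin n) 1 := by
      ext k
      simp [Matrix.mulVec_single]
    rw [hcol, Matrix.mulVec_mulVec, hU, Matrix.one_mulVec]
    have hij : j ≠ (i : Fin n) := fun h => hj (h ▸ i.2)
    simp [Pi.single_apply, hij]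
  exact hle hx

lemma quad_re (U : Matrix (Fin n) (Fin n) ℂ) (d : Fin n → ℝ) (x : Fin n → ℂ) :
    (star x ⬝ᵥ (U * diagonal (fun i => (d i : ℂ)) * star U) *ᵥ x).re
      = ∑ i, d i * Complex.normSq ((star U *ᵥ x) i) := by
  classical
  set y := star U *ᵥ x with hy
  have hsy : star x ᵥ* U = star y := by
    rw [hy, Matrix.star_mulVec, Matrix.star_eq_conjTranspose, conjTranspose_conjTranspose]
  have h1 : (U * diagonal (fun i => (d i : ℂ)) * star U) *ᵥ x
      = U *ᵥ (diagonal (fun i => (d i : ℂ)) *ᵥ y) := by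
    rw [hy, Matrix.mulVec_mulVec, Matrix.mulVec_mulVec, Matrix.mul_assoc]
  have hdiag : diagonal (fun i => (d i : ℂ)) *ᵥ y = fun i => (d i : ℂ) * y i := by
    ext i
    simp [Matrix.mulVec, Matrix.diagonal, dotProduct, ite_mul]
  have h2 : star x ⬝ᵥ (U * diagonal (fun i => (d i : ℂ)) * star U) *ᵥ x
      = ∑ i, ((d i : ℂ) * Complex.normSq (y i)) := by
    rw [h1, Matrix.dotProduct_mulVec, hsy, hdiag]
    simp only [dotProduct, Pi.star_apply]
    refine Finset.sum_congr rfl fun i _ => ?_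
    rw [Complex.normSq_eq_conj_mul_self]
    simp only [Complex.star_def]
    ring
  rw [h2]
  rw [Complex.re_sum]
  refine Finset.sum_congr rfl fun i _ => ?_
  rw [← Complex.ofReal_mul, Complex.ofReal_re]

lemma star_isUnit_of_unitary {U : Matrix (Fin n) (Fin n) ℂ}
    (hU1 : star U * U = 1) (hU2 : U * star U = 1) :
    IsUnit (star U) := ⟨⟨star U, U, hU1, hU2⟩, rfl⟩

lemma quad_neg_on_colSpan {U : Matrix (Fin n) (Fin n) ℂ}
    (hU1 : star U * U = 1) (hU2 : U * star U = 1)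
    (d : Fin n → ℝ) (P : Fin n → Prop)
    (hd : ∀ i, P i → d i < 0) {x : Fin n → ℂ}
    (hx : x ∈ colSpan U P) (hx0 : x ≠ 0) :
    (star x ⬝ᵥ (U * diagonal (fun i => (d i : ℂ)) * star U) *ᵥ x).re < 0 := by
  classical
  rw [quad_re]
  set y := star U *ᵥ x with hy
  have hy0 : y ≠ 0 := by
    intro h
    apply hx0
    have hinj := Matrix.mulVec_injective_iff_isUnit.mpr (star_isUnit_of_unitary hU1 hU2)
    have : star U *ᵥ x = star U *ᵥ 0 := by simpa [Matrix.mulVec_zero] using h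
    exact hinj this
  obtain ⟨j, hj⟩ := Function.ne_iff.mp hy0
  have hPj : P j := by
    by_contra hPj
    exact hj (mem_colSpan_apply_eq_zero hU1 hx hPj)
  have hterm : ∀ i ∈ Finset.univ, d i * Complex.normSq (y i) ≤ 0 := by
    intro i _
    by_cases hPi : P i
    · exact mul_nonpos_of_nonpos_of_nonneg (le_of_lt (hd i hPi)) (Complex.normSq_nonneg _)
    · rw [show y i = 0 from mem_colSpan_apply_eq_zero hU1 hx hPi]
      simp
  have hlt : d j * Complex.normSq (y j) < 0 :=
    mul_neg_of_neg_of_pos (hd j hPj) (Complex.normSq_pos.mpr hj)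
  calc ∑ i, d i * Complex.normSq (y i) < ∑ _i : Fin n, (0 : ℝ) :=
        Finset.sum_lt_sum hterm ⟨j, Finset.mem_univ j, by simpa using hlt⟩
    _ = 0 := by simp

/-- Core inertia bound: if the quadratic form of `U diag(d) U*` is negative definite on `W`,
then `finrank W + #{i | 0 ≤ d i} ≤ n`. -/
lemma core_bound {U : Matrix (Fin n) (Fin n) ℂ}
    (hU1 : star U * U = 1) (hU2 : U * star U = 1)
    (d : Fin n → ℝ) (W : Submodule ℂ (Fin n → ℂ))
    (hW : ∀ x ∈ W, x ≠ 0 →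
      (star x ⬝ᵥ (U * diagonal (fun i => (d i : ℂ)) * star U) *ᵥ x).re < 0) :
    Module.finrank ℂ W + Fintype.card {i // 0 ≤ d i} ≤ n := by
  classical
  set P : Fin n → Prop := fun i => 0 ≤ d i with hP
  set W' := colSpan U P with hW'
  have hUunit : IsUnit U := ⟨⟨U, star U, hU2, hU1⟩, rfl⟩
  have hdisj : W ⊓ W' = ⊥ := by
    rw [Submodule.eq_bot_iff]
    intro x hxmem
    by_contra hx0
    obtain ⟨hx1, hx2⟩ := Submodule.mem_inf.mp hxmem
    have hneg := hW x hx1 hx0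
    have hpos : 0 ≤ (star x ⬝ᵥ (U * diagonal (fun i => (d i : ℂ)) * star U) *ᵥ x).re := by
      rw [quad_re]
      refine Finset.sum_nonneg fun i _ => ?_
      by_cases hPi : P i
      · exact mul_nonneg hPi (Complex.normSq_nonneg _)
      · rw [show (star U *ᵥ x) i = 0 from mem_colSpan_apply_eq_zero hU1 hx2 hPi]
        simp
    linarith
  have hsum := Submodule.finrank_sup_add_finrank_inf_eq W W'
  rw [hdisj, finrank_bot, add_zero] at hsum
  have hle : Module.finrank ℂ ↥(W ⊔ W') ≤ n := by
    have := Submodule.finrank_le (W ⊔ W')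
    simpa [Module.finrank_pi] using this
  have hW'rank : Module.finrank ℂ W' = Fintype.card {i // P i} :=
    finrank_colSpan hUunit P
  have hPc : Fintype.card {i // P i} = Fintype.card {i // 0 ≤ d i} :=
    Fintype.card_congr (Equiv.subtypeEquivRight fun i => by rw [hP])
  omega

lemma re_le_of_posSemidef {A B : Matrix (Fin n) (Fin n) ℂ}
    (h : (B - A).PosSemidef) (x : Fin n → ℂ) :
    (star x ⬝ᵥ A *ᵥ x).re ≤ (star x ⬝ᵥ B *ᵥ x).re := by
  have h2 := h.dotProduct_mulVec_nonneg x
  rw [Matrix.sub_mulVec, dotProduct_sub] at h2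
  have := (Complex.le_def.mp h2).1
  simp only [Complex.sub_re, Complex.zero_re] at this
  linarith

lemma eigenvalues_ne_zero {A : Matrix (Fin n) (Fin n) ℂ} (hA : A.IsHermitian)
    (hu : IsUnit A) (i : Fin n) : hA.eigenvalues i ≠ 0 := by
  intro h0
  have hdet : A.det ≠ 0 := by
    intro hd
    rw [Matrix.isUnit_iff_isUnit_det, hd] at hu
    exact hu.ne_zero rfl
  rw [hA.det_eq_prod_eigenvalues] at hdet
  exact hdet (Finset.prod_eq_zero (Finset.mem_univ i) (by simp [h0]))

lemma spectral' {A : Matrix (Fin n) (Fin n) ℂ} (hA : A.IsHermitian) :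
    A = (hA.eigenvectorUnitary : Matrix (Fin n) (Fin n) ℂ)
      * diagonal (fun i => (hA.eigenvalues i : ℂ))
      * star (hA.eigenvectorUnitary : Matrix (Fin n) (Fin n) ℂ) :=
  hA.spectral_theorem

lemma inv_spectral {A : Matrix (Fin n) (Fin n) ℂ} (hA : A.IsHermitian) (hu : IsUnit A) :
    A⁻¹ = (hA.eigenvectorUnitary : Matrix (Fin n) (Fin n) ℂ)
      * diagonal (fun i => ((hA.eigenvalues i)⁻¹ : ℂ))
      * star (hA.eigenvectorUnitary : Matrix (Fin n) (Fin n) ℂ) := by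
  classical
  set U := (hA.eigenvectorUnitary : Matrix (Fin n) (Fin n) ℂ) with hUdef
  have hU1 : star U * U = 1 := Unitary.coe_star_mul_self hA.eigenvectorUnitary
  have hU2 : U * star U = 1 := Unitary.coe_mul_star_self hA.eigenvectorUnitary
  refine (Matrix.inv_eq_right_inv ?_)
  have hdd : (diagonal (fun i => (hA.eigenvalues i : ℂ)))
      * (diagonal (fun i => ((hA.eigenvalues i)⁻¹ : ℂ))) = 1 := by
    have h1 : ∀ i, (hA.eigenvalues i : ℂ) * ((hA.eigenvalues i : ℂ))⁻¹ = 1 := fun i =>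
      mul_inv_cancel₀ (Complex.ofReal_ne_zero.mpr (eigenvalues_ne_zero hA hu i))
    rw [Matrix.diagonal_mul_diagonal]
    simp only [h1, Matrix.diagonal_one]
  have h := spectral' hA
  calc A * (U * diagonal (fun i => ((hA.eigenvalues i)⁻¹ : ℂ)) * star U)
      = (U * diagonal (fun i => (hA.eigenvalues i : ℂ)) * star U)
        * (U * diagonal (fun i => ((hA.eigenvalues i)⁻¹ : ℂ)) * star U) :=
        congrArg (fun M => M * (U * diagonal (fun i => ((hA.eigenvalues i)⁻¹ : ℂ)) * star U)) h
    _ = U * (diagonal (fun i => (hA.eigenvalues i : ℂ)) * ((star U * U)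
          * (diagonal (fun i => ((hA.eigenvalues i)⁻¹ : ℂ)) * star U))) := by
        simp only [Matrix.mul_assoc]
    _ = U * ((diagonal (fun i => (hA.eigenvalues i : ℂ))
          * diagonal (fun i => ((hA.eigenvalues i)⁻¹ : ℂ))) * star U) := by
        rw [hU1, Matrix.one_mul, Matrix.mul_assoc]
    _ = 1 := by rw [hdd, Matrix.one_mul, hU2]

end Aux

theorem same_negCount_of_antitone {n : ℕ} (H₁ H₂ : Matrix (Fin n) (Fin n) ℂ)
    (h1 : H₁.IsHermitian) (h2 : H₂.IsHermitian)
    (hu1 : IsUnit H₁) (hu2 : IsUnit H₂)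
    (hle : (H₂ - H₁).PosSemidef)
    (hinv : (H₁⁻¹ - H₂⁻¹).PosSemidef) :
    negCount H₁ = negCount H₂ := by
  classical
  set U₁ := (h1.eigenvectorUnitary : Matrix (Fin n) (Fin n) ℂ) with hU₁def
  set U₂ := (h2.eigenvectorUnitary : Matrix (Fin n) (Fin n) ℂ) with hU₂def
  set l₁ := h1.eigenvalues with hl₁def
  set l₂ := h2.eigenvalues with hl₂def
  have hU₁1 : star U₁ * U₁ = 1 := Unitary.coe_star_mul_self h1.eigenvectorUnitary
  have hU₁2 : U₁ * star U₁ = 1 := Unitary.coe_mul_star_self h1.eigenvectorUnitary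
  have hU₂1 : star U₂ * U₂ = 1 := Unitary.coe_star_mul_self h2.eigenvectorUnitary
  have hU₂2 : U₂ * star U₂ = 1 := Unitary.coe_mul_star_self h2.eigenvectorUnitary
  -- partition counts
  have hpart₁ : Fintype.card {i // l₁ i < 0} + Fintype.card {i // 0 ≤ l₁ i} = n := by
    have := Fintype.card_subtype_compl (fun i : Fin n => 0 ≤ l₁ i)
    have hc : Fintype.card {i // l₁ i < 0} = Fintype.card {i // ¬ 0 ≤ l₁ i} :=
      Fintype.card_congr (Equiv.subtypeEquivRight fun i => (not_le).symm)
    have hle' : Fintype.card {i // 0 ≤ l₁ i} ≤ n := by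
      simpa using Fintype.card_subtype_le (fun i : Fin n => 0 ≤ l₁ i)
    rw [hc, this]
    simp only [Fintype.card_fin]
    omega
  have hpart₂ : Fintype.card {i // l₂ i < 0} + Fintype.card {i // 0 ≤ l₂ i} = n := by
    have := Fintype.card_subtype_compl (fun i : Fin n => 0 ≤ l₂ i)
    have hc : Fintype.card {i // l₂ i < 0} = Fintype.card {i // ¬ 0 ≤ l₂ i} :=
      Fintype.card_congr (Equiv.subtypeEquivRight fun i => (not_le).symm)
    have hle' : Fintype.card {i // 0 ≤ l₂ i} ≤ n := by
      simpa using Fintype.card_subtype_le (fun i : Fin n => 0 ≤ l₂ i)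
    rw [hc, this]
    simp only [Fintype.card_fin]
    omega
  -- Inequality 1 : negCount H₂ ≤ negCount H₁
  have ineq1 : Fintype.card {i // l₂ i < 0} ≤ Fintype.card {i // l₁ i < 0} := by
    set W := colSpan U₂ (fun i => l₂ i < 0) with hWdef
    have hW : ∀ x ∈ W, x ≠ 0 →
        (star x ⬝ᵥ (U₁ * diagonal (fun i => (l₁ i : ℂ)) * star U₁) *ᵥ x).re < 0 := by
      intro x hx hx0
      have hB : (star x ⬝ᵥ H₂ *ᵥ x).re < 0 := by
        conv_lhs => rw [spectral' h2]
        exact quad_neg_on_colSpan hU₂1 hU₂2 l₂ (fun i => l₂ i < 0) (fun i hi => hi) hx hx0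
      have hA : (star x ⬝ᵥ H₁ *ᵥ x).re ≤ (star x ⬝ᵥ H₂ *ᵥ x).re :=
        re_le_of_posSemidef hle x
      have hA' : (star x ⬝ᵥ (U₁ * diagonal (fun i => (l₁ i : ℂ)) * star U₁) *ᵥ x).re
          = (star x ⬝ᵥ H₁ *ᵥ x).re := by
        conv_rhs => rw [spectral' h1]
      linarith
    have hcore := core_bound hU₁1 hU₁2 l₁ W hW
    have hWrank : Module.finrank ℂ W = Fintype.card {i // l₂ i < 0} :=
      finrank_colSpan ⟨⟨U₂, star U₂, hU₂2, hU₂1⟩, rfl⟩ _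
    omega
  -- Inequality 2 : negCount H₁ ≤ negCount H₂, via inverses
  have ineq2 : Fintype.card {i // l₁ i < 0} ≤ Fintype.card {i // l₂ i < 0} := by
    set W := colSpan U₁ (fun i => l₁ i < 0) with hWdef
    have hW : ∀ x ∈ W, x ≠ 0 →
        (star x ⬝ᵥ (U₂ * diagonal (fun i => (((l₂ i)⁻¹ : ℝ) : ℂ)) * star U₂) *ᵥ x).re < 0 := by
      intro x hx hx0
      have hB : (star x ⬝ᵥ H₁⁻¹ *ᵥ x).re < 0 := by
        conv_lhs => rw [inv_spectral h1 hu1]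
        have : (fun i => ((l₁ i)⁻¹ : ℂ)) = fun i => (((l₁ i)⁻¹ : ℝ) : ℂ) := by
          ext i; push_cast; ring
        rw [this]
        exact quad_neg_on_colSpan hU₁1 hU₁2 (fun i => (l₁ i)⁻¹) (fun i => l₁ i < 0)
          (fun i hi => inv_lt_zero.mpr hi) hx hx0
      have hA : (star x ⬝ᵥ H₂⁻¹ *ᵥ x).re ≤ (star x ⬝ᵥ H₁⁻¹ *ᵥ x).re :=
        re_le_of_posSemidef hinv x
      have hA' : (star x ⬝ᵥ (U₂ * diagonal (fun i => (((l₂ i)⁻¹ : ℝ) : ℂ)) * star U₂) *ᵥ x).re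
          = (star x ⬝ᵥ H₂⁻¹ *ᵥ x).re := by
        conv_rhs => rw [inv_spectral h2 hu2]
        have : (fun i => ((l₂ i)⁻¹ : ℂ)) = fun i => (((l₂ i)⁻¹ : ℝ) : ℂ) := by
          ext i; push_cast; ring
        rw [this]
      linarith
    have hcore := core_bound hU₂1 hU₂2 (fun i => (l₂ i)⁻¹) W hW
    have hcard : Fintype.card {i // 0 ≤ (l₂ i)⁻¹} = Fintype.card {i // 0 ≤ l₂ i} :=
      Fintype.card_congr (Equiv.subtypeEquivRight fun i => inv_nonneg)
    have hWrank : Module.finrank ℂ W = Fintype.card {i // l₁ i < 0} :=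
      finrank_colSpan ⟨⟨U₁, star U₁, hU₁2, hU₁1⟩, rfl⟩ _
    have hbeta : Fintype.card {i // 0 ≤ (fun i => (l₂ i)⁻¹) i}
        = Fintype.card {i // 0 ≤ (l₂ i)⁻¹} :=
      Fintype.card_congr (Equiv.subtypeEquivRight fun i => Iff.rfl)
    omega
  rw [negCount, dif_pos h1, negCount, dif_pos h2]
  exact le_antisymm ineq2 ineq1
end

section
/- Let H₁ and H₂ be Hermitian n×n complex matrices with H₁ ≤ H₂. If v is a vector lying both in the span of the eigenvectors of H₂ with nonpositive eigenvalues and in the span of the eigenvectors of H₁ with nonnegative eigenvalues, then H₁ v = 0 and H₂ v = 0. -/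
open Matrix ComplexOrder

/-- The span of the eigenvectors of a Hermitian matrix whose eigenvalue satisfies `P`. -/
noncomputable def eigSpan {n : ℕ} {A : Matrix (Fin n) (Fin n) ℂ} (hA : A.IsHermitian)
    (P : ℝ → Prop) : Submodule ℂ (EuclideanSpace ℂ (Fin n)) :=
  Submodule.span ℂ {w | ∃ i, P (hA.eigenvalues i) ∧ w = hA.eigenvectorBasis i}

lemma repr_zero_of_not {n : ℕ} {A : Matrix (Fin n) (Fin n) ℂ} (hA : A.IsHermitian)
    (P : ℝ → Prop) {v : EuclideanSpace ℂ (Fin n)} (hv : v ∈ eigSpan hA P) {j : Fin n}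
    (hj : ¬ P (hA.eigenvalues j)) :
    hA.eigenvectorBasis.repr v j = 0 := by
  rw [OrthonormalBasis.repr_apply_apply]
  induction hv using Submodule.span_induction with
  | mem x hx =>
    obtain ⟨i, hPi, rfl⟩ := hx
    exact hA.eigenvectorBasis.orthonormal.2 (fun h => hj (h ▸ hPi))
  | zero => simp
  | add x y _ _ hx hy => rw [inner_add_right, hx, hy, add_zero]
  | smul c x _ hx => rw [inner_smul_right, hx, mul_zero]

lemma toEuclideanLin_eigenvectorBasis {n : ℕ} {A : Matrix (Fin n) (Fin n) ℂ}
    (hA : A.IsHermitian) (i : Fin n) :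
    Matrix.toEuclideanLin A (hA.eigenvectorBasis i) =
      (hA.eigenvalues i : ℂ) • hA.eigenvectorBasis i := by
  apply PiLp.ext
  intro j
  have := congrFun (hA.mulVec_eigenvectorBasis i) j
  simpa [Matrix.toEuclideanLin_apply, Pi.smul_apply, Complex.real_smul] using this

lemma toEuclideanLin_eq_sum {n : ℕ} {A : Matrix (Fin n) (Fin n) ℂ}
    (hA : A.IsHermitian) (v : EuclideanSpace ℂ (Fin n)) :
    Matrix.toEuclideanLin A v =
      ∑ i, ((hA.eigenvalues i : ℂ) * hA.eigenvectorBasis.repr v i) • hA.eigenvectorBasis i := by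
  conv_lhs => rw [← hA.eigenvectorBasis.sum_repr v]
  rw [map_sum]
  refine Finset.sum_congr rfl fun i _ => ?_
  rw [_root_.map_smul, toEuclideanLin_eigenvectorBasis, smul_smul, mul_comm]

lemma inner_toEuclideanLin {n : ℕ} {A : Matrix (Fin n) (Fin n) ℂ}
    (hA : A.IsHermitian) (v : EuclideanSpace ℂ (Fin n)) :
    (inner ℂ v (Matrix.toEuclideanLin A v) : ℂ) =
      ∑ i, (hA.eigenvalues i : ℂ) * (‖hA.eigenvectorBasis.repr v i‖ : ℂ)^2 := by
  rw [toEuclideanLin_eq_sum hA, inner_sum]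
  refine Finset.sum_congr rfl fun i _ => ?_
  rw [inner_smul_right]
  have h1 : (inner ℂ v (hA.eigenvectorBasis i) : ℂ)
      = starRingEnd ℂ (hA.eigenvectorBasis.repr v i) := by
    rw [OrthonormalBasis.repr_apply_apply, ← inner_conj_symm]
  rw [h1, mul_assoc, Complex.mul_conj, Complex.normSq_eq_norm_sq]
  push_cast
  ring

lemma sum_form {n : ℕ} {A : Matrix (Fin n) (Fin n) ℂ}
    (hA : A.IsHermitian) (v : EuclideanSpace ℂ (Fin n)) :
    Complex.re (inner ℂ v (Matrix.toEuclideanLin A v) : ℂ) =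
      ∑ i, hA.eigenvalues i * ‖hA.eigenvectorBasis.repr v i‖^2 := by
  rw [inner_toEuclideanLin hA v, Complex.re_sum]
  refine Finset.sum_congr rfl fun i _ => ?_
  norm_cast

lemma zero_of_terms {n : ℕ} {A : Matrix (Fin n) (Fin n) ℂ}
    (hA : A.IsHermitian) (v : EuclideanSpace ℂ (Fin n))
    (h : ∀ i, hA.eigenvalues i * ‖hA.eigenvectorBasis.repr v i‖^2 = 0) :
    Matrix.toEuclideanLin A v = 0 := by
  rw [toEuclideanLin_eq_sum hA]
  refine Finset.sum_eq_zero fun i _ => ?_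
  rcases mul_eq_zero.1 (h i) with h' | h'
  · rw [h']; simp
  · have : hA.eigenvectorBasis.repr v i = 0 := by
      have := pow_eq_zero_iff (n := 2) (by norm_num) |>.1 h'
      simpa using this
    rw [this]; simp

theorem kernel_of_double_membership {n : ℕ} (H₁ H₂ : Matrix (Fin n) (Fin n) ℂ)
    (h1 : H₁.IsHermitian) (h2 : H₂.IsHermitian)
    (hle : (H₂ - H₁).PosSemidef)
    (v : EuclideanSpace ℂ (Fin n))
    (hv2 : v ∈ eigSpan h2 (fun t => t ≤ 0))
    (hv1 : v ∈ eigSpan h1 (fun t => 0 ≤ t)) :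
    Matrix.toEuclideanLin H₁ v = 0 ∧ Matrix.toEuclideanLin H₂ v = 0 := by
  set r₁ := ∑ i, h1.eigenvalues i * ‖h1.eigenvectorBasis.repr v i‖^2 with hr₁
  set r₂ := ∑ i, h2.eigenvalues i * ‖h2.eigenvectorBasis.repr v i‖^2 with hr₂
  have ht1 : ∀ i : Fin n, 0 ≤ h1.eigenvalues i * ‖h1.eigenvectorBasis.repr v i‖^2 := by
    intro i
    by_cases h : 0 ≤ h1.eigenvalues i
    · positivity
    · rw [repr_zero_of_not h1 _ hv1 h]; simp
  have ht2 : ∀ i : Fin n, h2.eigenvalues i * ‖h2.eigenvectorBasis.repr v i‖^2 ≤ 0 := by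
    intro i
    by_cases h : h2.eigenvalues i ≤ 0
    · exact mul_nonpos_of_nonpos_of_nonneg h (by positivity)
    · rw [repr_zero_of_not h2 _ hv2 h]; simp
  have hr1 : 0 ≤ r₁ := Finset.sum_nonneg fun i _ => ht1 i
  have hr2 : r₂ ≤ 0 := Finset.sum_nonpos fun i _ => ht2 i
  have hdiff : r₁ ≤ r₂ := by
    have hps := hle.re_dotProduct_nonneg (WithLp.equiv 2 _ v)
    have hin : (inner ℂ v (Matrix.toEuclideanLin (H₂ - H₁) v) : ℂ)
        = dotProduct (star (WithLp.equiv 2 _ v)) ((H₂ - H₁) *ᵥ (WithLp.equiv 2 _ v)) := by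
      rw [EuclideanSpace.inner_eq_star_dotProduct, dotProduct_comm]
      rfl
    have : 0 ≤ Complex.re (inner ℂ v (Matrix.toEuclideanLin (H₂ - H₁) v) : ℂ) := by
      rw [hin]; exact hps
    rw [map_sub, LinearMap.sub_apply, inner_sub_right, Complex.sub_re,
      sum_form h1 v, sum_form h2 v] at this
    linarith
  have hr1z : r₁ = 0 := le_antisymm (by linarith) hr1
  have hr2z : r₂ = 0 := le_antisymm hr2 (by linarith)
  constructor
  · refine zero_of_terms h1 v fun i => ?_
    exact (Finset.sum_eq_zero_iff_of_nonneg (fun i _ => ht1 i)).1 hr1z i (Finset.mem_univ i)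
  · refine zero_of_terms h2 v fun i => ?_
    have h := (Finset.sum_eq_zero_iff_of_nonneg (s := Finset.univ)
      (f := fun i => -(h2.eigenvalues i * ‖h2.eigenvectorBasis.repr v i‖^2))
      (fun i _ => neg_nonneg.2 (ht2 i))).1
      (by rw [Finset.sum_neg_distrib, ← hr₂, hr2z, neg_zero]) i (Finset.mem_univ i)
    linarith [h]
end

section
/- Let H₁ and H₂ be Hermitian n×n complex matrices with H₁ ≤ H₂. If the numbers of nonpositive eigenvalues of H₁ and H₂ coincide, then ker H₁ ⊆ ker H₂. -/
open Matrix ComplexOrder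

variable {n : ℕ}

noncomputable def coordMap {A : Matrix (Fin n) (Fin n) ℂ} (h : A.IsHermitian)
    (x : Fin n → ℂ) : Fin n → ℂ :=
  star (h.eigenvectorUnitary : Matrix (Fin n) (Fin n) ℂ) *ᵥ x

lemma coordMap_eq_zero_iff {A : Matrix (Fin n) (Fin n) ℂ} (h : A.IsHermitian)
    (x : Fin n → ℂ) : coordMap h x = 0 ↔ x = 0 := by
  constructor
  · intro hy
    have : (h.eigenvectorUnitary : Matrix (Fin n) (Fin n) ℂ) *ᵥ coordMap h x = x := by
      rw [coordMap, mulVec_mulVec,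
        (Matrix.mem_unitaryGroup_iff).mp (h.eigenvectorUnitary).2, one_mulVec]
    rw [hy, mulVec_zero] at this
    exact this.symm
  · intro hx; simp [coordMap, hx]

lemma quad_eq {A : Matrix (Fin n) (Fin n) ℂ} (h : A.IsHermitian) (x : Fin n → ℂ) :
    star x ⬝ᵥ (A *ᵥ x) =
      ((∑ i, h.eigenvalues i * Complex.normSq (coordMap h x i) : ℝ) : ℂ) := by
  set U : Matrix (Fin n) (Fin n) ℂ := (h.eigenvectorUnitary : Matrix (Fin n) (Fin n) ℂ) with hU
  have hsx : star x ᵥ* U = star (coordMap h x) := by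
    rw [coordMap, star_mulVec]
    rw [← Matrix.star_eq_conjTranspose, star_star]
  conv_lhs => rw [h.spectral_theorem, Unitary.conjStarAlgAut_apply, ← mulVec_mulVec, ← mulVec_mulVec,
    dotProduct_mulVec (star x) U, hsx, ← coordMap]
  rw [dotProduct]
  push_cast
  refine Finset.sum_congr rfl fun i _ => ?_
  rw [mulVec_diagonal]
  have hcast : (RCLike.ofReal ∘ h.eigenvalues) i = Complex.ofReal (h.eigenvalues i) := rfl
  rw [hcast]
  simp only [Pi.star_apply, Function.comp_apply, Complex.star_def]
  rw [Complex.normSq_eq_conj_mul_self]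
  push_cast
  ring

noncomputable def coordKer {A : Matrix (Fin n) (Fin n) ℂ} (h : A.IsHermitian)
    (p : Fin n → Prop) [DecidablePred p] : Submodule ℂ (Fin n → ℂ) :=
  LinearMap.ker ((LinearMap.funLeft ℂ ℂ (Subtype.val : {i // p i} → Fin n)).comp
    (Matrix.mulVecLin (star (h.eigenvectorUnitary : Matrix (Fin n) (Fin n) ℂ))))

lemma mem_coordKer {A : Matrix (Fin n) (Fin n) ℂ} (h : A.IsHermitian)
    (p : Fin n → Prop) [DecidablePred p] (x : Fin n → ℂ) :
    x ∈ coordKer h p ↔ ∀ i, p i → coordMap h x i = 0 := by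
  simp only [coordKer, LinearMap.mem_ker, LinearMap.comp_apply, Matrix.mulVecLin_apply,
    LinearMap.funLeft_apply, funext_iff]
  constructor
  · intro hx i hi; exact hx ⟨i, hi⟩
  · intro hx i; exact hx i.1 i.2

lemma coordKer_finrank {A : Matrix (Fin n) (Fin n) ℂ} (h : A.IsHermitian)
    (p : Fin n → Prop) [DecidablePred p] :
    Module.finrank ℂ (coordKer h p) = n - Fintype.card {i // p i} := by
  unfold coordKer
  set L := (LinearMap.funLeft ℂ ℂ (Subtype.val : {i // p i} → Fin n)).comp
    (Matrix.mulVecLin (star (h.eigenvectorUnitary : Matrix (Fin n) (Fin n) ℂ)))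
  have hsurj : Function.Surjective L := by
    intro z
    refine ⟨(h.eigenvectorUnitary : Matrix (Fin n) (Fin n) ℂ) *ᵥ
      (fun i => if hi : p i then z ⟨i, hi⟩ else 0), ?_⟩
    ext j
    simp only [L, LinearMap.comp_apply, Matrix.mulVecLin_apply, mulVec_mulVec,
      (Matrix.mem_unitaryGroup_iff').mp (h.eigenvectorUnitary).2, one_mulVec,
      LinearMap.funLeft_apply]
    simp [j.2]
  have h1 := LinearMap.finrank_range_add_finrank_ker L
  rw [LinearMap.range_eq_top.mpr hsurj, finrank_top,
    Module.finrank_fintype_fun_eq_card, Module.finrank_fintype_fun_eq_card,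
    Fintype.card_fin] at h1
  have hle : Fintype.card {i // p i} ≤ n := by
    simpa using Fintype.card_subtype_le p
  omega

theorem ker_subset_of_nonposCount_eq {n : ℕ} (H₁ H₂ : Matrix (Fin n) (Fin n) ℂ)
    (h1 : H₁.IsHermitian) (h2 : H₂.IsHermitian)
    (hle : (H₂ - H₁).PosSemidef)
    (hcount : nonposCount H₁ = nonposCount H₂) :
    ∀ v : Fin n → ℂ, H₁ *ᵥ v = 0 → H₂ *ᵥ v = 0 := by
  classical
  intro v hv
  set q₁ : (Fin n → ℂ) → ℝ :=
    fun x => ∑ i, h1.eigenvalues i * Complex.normSq (coordMap h1 x i) with hq₁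
  set q₂ : (Fin n → ℂ) → ℝ :=
    fun x => ∑ i, h2.eigenvalues i * Complex.normSq (coordMap h2 x i) with hq₂
  have hquad₁ : ∀ x, star x ⬝ᵥ (H₁ *ᵥ x) = (q₁ x : ℂ) := fun x => quad_eq h1 x
  have hquad₂ : ∀ x, star x ⬝ᵥ (H₂ *ᵥ x) = (q₂ x : ℂ) := fun x => quad_eq h2 x
  have hmono : ∀ x, q₁ x ≤ q₂ x := by
    intro x
    have h0 := hle.dotProduct_mulVec_nonneg x
    rw [sub_mulVec, dotProduct_sub, hquad₁, hquad₂, ← Complex.ofReal_sub,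
      Complex.zero_le_real] at h0
    linarith
  -- counts
  have hcount1 : nonposCount H₁ = Fintype.card {i // h1.eigenvalues i ≤ 0} := by
    simp only [nonposCount]; rw [dif_pos h1]
  have hcount2 : nonposCount H₂ = Fintype.card {i // h2.eigenvalues i ≤ 0} := by
    simp only [nonposCount]; rw [dif_pos h2]
  set W := coordKer h2 (fun i => 0 < h2.eigenvalues i) with hWdef
  set P := coordKer h1 (fun i => h1.eigenvalues i ≤ 0) with hPdef
  have hcard2 : Fintype.card {i // h2.eigenvalues i ≤ 0}
      = n - Fintype.card {i // 0 < h2.eigenvalues i} := by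
    have e : Fintype.card {i // h2.eigenvalues i ≤ 0}
        = Fintype.card {i // ¬ 0 < h2.eigenvalues i} :=
      Fintype.card_congr (Equiv.subtypeEquivRight fun i => not_lt.symm)
    rw [e, Fintype.card_subtype_compl, Fintype.card_fin]
  have hWrank : Module.finrank ℂ W = nonposCount H₂ := by
    rw [hWdef, coordKer_finrank, hcount2, hcard2]
  have hPrank : Module.finrank ℂ P = n - nonposCount H₁ := by
    rw [hPdef, coordKer_finrank, hcount1]
  have hcard1le : nonposCount H₁ ≤ n := by
    rw [hcount1]; simpa using Fintype.card_subtype_le (fun i => h1.eigenvalues i ≤ 0)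
  -- q₂ nonpositive on W
  have hq2W : ∀ w ∈ W, q₂ w ≤ 0 := by
    intro w hw
    apply Finset.sum_nonpos
    intro i _
    by_cases hi : 0 < h2.eigenvalues i
    · rw [(mem_coordKer h2 _ w).mp hw i hi]
      simp
    · exact mul_nonpos_of_nonpos_of_nonneg (not_lt.mp hi) (Complex.normSq_nonneg _)
  -- q₁ nonpositive on W ⊔ span v
  have hq1W' : ∀ x ∈ W ⊔ (ℂ ∙ v), q₁ x ≤ 0 := by
    intro x hx
    obtain ⟨w, hw, z, hz, rfl⟩ := Submodule.mem_sup.mp hx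
    obtain ⟨c, rfl⟩ := Submodule.mem_span_singleton.mp hz
    have hcross : star v ⬝ᵥ (H₁ *ᵥ w) = 0 := by
      rw [dotProduct_mulVec]
      conv_lhs => rw [← h1, ← star_mulVec, hv, star_zero]
      exact zero_dotProduct _
    have heq : (q₁ (w + c • v) : ℂ) = (q₁ w : ℂ) := by
      rw [← hquad₁, ← hquad₁]
      rw [mulVec_add, mulVec_smul, hv, smul_zero, add_zero, star_add, star_smul,
        add_dotProduct, smul_dotProduct, hcross, smul_zero, add_zero]
    have heq' : q₁ (w + c • v) = q₁ w := Complex.ofReal_inj.mp heq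
    rw [heq']
    exact (hmono w).trans (hq2W w hw)
  -- v ∈ W
  have hvW : v ∈ W := by
    by_contra hvW
    have hlt : W < W ⊔ (ℂ ∙ v) := by
      refine lt_of_le_of_ne le_sup_left fun he => hvW ?_
      rw [he]; exact Submodule.mem_sup_right (Submodule.mem_span_singleton_self v)
    have hrank' : nonposCount H₂ + 1 ≤ Module.finrank ℂ ↥(W ⊔ (ℂ ∙ v)) := by
      have := Submodule.finrank_lt_finrank_of_lt hlt
      omega
    have hsum := Submodule.finrank_sup_add_finrank_inf_eq (W ⊔ (ℂ ∙ v)) P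
    have hsup_le : Module.finrank ℂ ↥((W ⊔ (ℂ ∙ v)) ⊔ P) ≤ n := by
      have := Submodule.finrank_le ((W ⊔ (ℂ ∙ v)) ⊔ P)
      rwa [Module.finrank_fintype_fun_eq_card, Fintype.card_fin] at this
    have hpos : 0 < Module.finrank ℂ ↥((W ⊔ (ℂ ∙ v)) ⊓ P) := by omega
    have : Nontrivial ↥((W ⊔ (ℂ ∙ v)) ⊓ P) := Module.finrank_pos_iff.mp hpos
    obtain ⟨⟨x, hx⟩, hxne⟩ := exists_ne (0 : ↥((W ⊔ (ℂ ∙ v)) ⊓ P))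
    have hxne' : x ≠ 0 := by
      intro h0
      exact hxne (Subtype.ext h0)
    have hxW' : x ∈ W ⊔ (ℂ ∙ v) := hx.1
    have hxP : x ∈ P := hx.2
    -- q₁ x > 0 since x ∈ P nonzero
    have hy : coordMap h1 x ≠ 0 := fun h0 => hxne' ((coordMap_eq_zero_iff h1 x).mp h0)
    obtain ⟨j, hj⟩ := Function.ne_iff.mp hy
    have hjpos : 0 < h1.eigenvalues j := by
      by_contra hjn
      exact hj (((mem_coordKer h1 _ x).mp hxP j (not_lt.mp hjn)))
    have hterm : 0 < h1.eigenvalues j * Complex.normSq (coordMap h1 x j) :=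
      mul_pos hjpos (by simpa [Complex.normSq_pos] using hj)
    have hq1pos : 0 < q₁ x := by
      apply Finset.sum_pos'
      · intro i _
        by_cases hi : h1.eigenvalues i ≤ 0
        · rw [(mem_coordKer h1 _ x).mp hxP i hi]; simp
        · exact mul_nonneg (le_of_lt (not_le.mp hi)) (Complex.normSq_nonneg _)
      · exact ⟨j, Finset.mem_univ j, hterm⟩
    exact absurd (hq1W' x hxW') (not_le.mpr hq1pos)
  -- now v ∈ W: conclude H₂ v = 0
  have hq1v : q₁ v = 0 := by
    have : (q₁ v : ℂ) = 0 := by rw [← hquad₁, hv, dotProduct_zero]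
    exact_mod_cast this
  have hq2v : 0 ≤ q₂ v := hq1v ▸ hmono v
  have hterms : ∀ i ∈ Finset.univ, h2.eigenvalues i * Complex.normSq (coordMap h2 v i) ≤ 0 := by
    intro i _
    by_cases hi : 0 < h2.eigenvalues i
    · rw [(mem_coordKer h2 _ v).mp hvW i hi]; simp
    · exact mul_nonpos_of_nonpos_of_nonneg (not_lt.mp hi) (Complex.normSq_nonneg _)
  have hsum0 : q₂ v = 0 := le_antisymm (Finset.sum_nonpos hterms) hq2v
  have hzero : ∀ i, (h2.eigenvalues i : ℂ) * coordMap h2 v i = 0 := by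
    intro i
    have := (Finset.sum_eq_zero_iff_of_nonpos hterms).mp hsum0 i (Finset.mem_univ i)
    by_cases hμ : h2.eigenvalues i = 0
    · rw [hμ]; simp
    · have hns : Complex.normSq (coordMap h2 v i) = 0 := by
        rcases mul_eq_zero.mp this with h | h
        · exact absurd h hμ
        · exact h
      rw [Complex.normSq_eq_zero.mp hns, mul_zero]
  have hD : diagonal (RCLike.ofReal ∘ h2.eigenvalues) *ᵥ coordMap h2 v = 0 := by
    ext i
    rw [Pi.zero_apply, mulVec_diagonal]
    exact hzero i
  conv_lhs => rw [h2.spectral_theorem, Unitary.conjStarAlgAut_apply, ← mulVec_mulVec, ← mulVec_mulVec]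
  rw [show (star (h2.eigenvectorUnitary : Matrix (Fin n) (Fin n) ℂ)) *ᵥ v = coordMap h2 v from rfl,
    hD, mulVec_zero]
end

section
/- Let H₁ and H₂ be Hermitian n×n complex matrices with H₁ ≤ H₂. If H₁ and H₂ have the same number of negative eigenvalues and the same number of zero eigenvalues, then ker H₁ = ker H₂. -/
open Matrix ComplexOrder

section KerAux

variable {n : ℕ} {A : Matrix (Fin n) (Fin n) ℂ}

private lemma repr_mulVec' (h : A.IsHermitian) (u : EuclideanSpace ℂ (Fin n)) (i : Fin n) :
    h.eigenvectorBasis.repr (WithLp.toLp 2 (A *ᵥ u)) i = h.eigenvalues i * h.eigenvectorBasis.repr u i := by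
  set B := h.eigenvectorBasis with hB
  have hu : WithLp.toLp 2 (A *ᵥ u)
      = ∑ j, B.repr u j • ((h.eigenvalues j : ℂ) • (B j : EuclideanSpace ℂ (Fin n))) := by
    conv_lhs => rw [← B.sum_repr u]
    rw [show A *ᵥ (∑ j, B.repr u j • B j : EuclideanSpace ℂ (Fin n))
        = A.mulVecLin (∑ j, B.repr u j • B j : EuclideanSpace ℂ (Fin n)).ofLp from rfl, WithLp.ofLp_sum, map_sum]
    rw [WithLp.toLp_sum]
    refine Finset.sum_congr rfl fun j _ => ?_
    show WithLp.toLp 2 (A *ᵥ (B.repr u j • (B j : Fin n → ℂ))) = _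
    rw [mulVec_smul]
    congr 1
    congr 1
    exact (h.mulVec_eigenvectorBasis j).trans (algebraMap_smul ℂ _ _).symm
  rw [hu, map_sum]
  have hr : ∀ j, B.repr (B.repr u j • ((h.eigenvalues j : ℂ) • (B j : EuclideanSpace ℂ (Fin n))))
      = B.repr u j • ((h.eigenvalues j : ℂ) • EuclideanSpace.single j (1:ℂ)) := by
    intro j; rw [_root_.map_smul, _root_.map_smul, OrthonormalBasis.repr_self]
  simp only [hr]
  rw [WithLp.ofLp_sum, Finset.sum_apply]
  simp [EuclideanSpace.single_apply, mul_comm]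

/-- the span of eigenvectors whose eigenvalue satisfies `p` -/
private noncomputable def eigSpace (h : A.IsHermitian) (p : ℝ → Prop) :
    Submodule ℂ (EuclideanSpace ℂ (Fin n)) :=
  Submodule.span ℂ (Set.range fun i : {i // p (h.eigenvalues i)} =>
    (h.eigenvectorBasis i.1 : EuclideanSpace ℂ (Fin n)))

private lemma finrank_eigSpace (h : A.IsHermitian) (p : ℝ → Prop)
    [∀ i, Decidable (p (h.eigenvalues i))] :
    Module.finrank ℂ (eigSpace h p) = Fintype.card {i // p (h.eigenvalues i)} :=
  finrank_span_eq_card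
    ((h.eigenvectorBasis.orthonormal.comp _ Subtype.val_injective).linearIndependent)

private lemma mem_eigSpace_iff (h : A.IsHermitian) (p : ℝ → Prop)
    (u : EuclideanSpace ℂ (Fin n)) :
    u ∈ eigSpace h p ↔ ∀ i, ¬ p (h.eigenvalues i) → h.eigenvectorBasis.repr u i = 0 := by
  classical
  constructor
  · intro hu i hi
    induction hu using Submodule.span_induction with
    | mem x hx =>
      obtain ⟨j, rfl⟩ := hx
      rw [OrthonormalBasis.repr_self]
      have : (j : Fin n) ≠ i := fun hji => hi (hji ▸ j.2)
      simp [EuclideanSpace.single_apply, Ne.symm this]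
    | zero => simp
    | add x y hx hy ihx ihy => simp [ihx, ihy]
    | smul a x hx ihx => simp [ihx]
  · intro hc
    have hu : u = ∑ j ∈ Finset.univ.filter (fun j => p (h.eigenvalues j)),
        h.eigenvectorBasis.repr u j • h.eigenvectorBasis j := by
      conv_lhs => rw [← h.eigenvectorBasis.sum_repr u]
      rw [← Finset.sum_filter_add_sum_filter_not Finset.univ (fun j => p (h.eigenvalues j))]
      rw [add_eq_left]
      refine Finset.sum_eq_zero fun j hj => ?_
      rw [hc j (Finset.mem_filter.1 hj).2, zero_smul]
    rw [hu]
    exact Submodule.sum_mem _ fun j hj => Submodule.smul_mem _ _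
      (Submodule.subset_span ⟨⟨j, (Finset.mem_filter.1 hj).2⟩, rfl⟩)

/-- the quadratic form of `A` expressed through eigen-coordinates -/
private noncomputable def qf (h : A.IsHermitian) (u : EuclideanSpace ℂ (Fin n)) : ℝ :=
  ∑ i, h.eigenvalues i * ‖h.eigenvectorBasis.repr u i‖ ^ 2

private lemma qf_eq (h : A.IsHermitian) (u : EuclideanSpace ℂ (Fin n)) :
    (qf h u : ℂ) = star (u : Fin n → ℂ) ⬝ᵥ (A *ᵥ u) := by
  have h0 : star (u : Fin n → ℂ) ⬝ᵥ (A *ᵥ u)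
      = inner (𝕜 := ℂ) u (WithLp.toLp 2 (A *ᵥ u)) := by
    rw [EuclideanSpace.inner_eq_star_dotProduct, dotProduct_comm]
  rw [h0, ← h.eigenvectorBasis.repr.inner_map_map u (WithLp.toLp 2 (A *ᵥ u))]
  rw [PiLp.inner_apply]
  rw [qf]
  push_cast
  refine Finset.sum_congr rfl fun i _ => ?_
  rw [RCLike.inner_apply, repr_mulVec' h u i]
  rw [show (h.eigenvalues i : ℂ) * h.eigenvectorBasis.repr u i * (starRingEnd ℂ) (h.eigenvectorBasis.repr u i)
      = (h.eigenvalues i : ℂ) * ((starRingEnd ℂ) (h.eigenvectorBasis.repr u i) * h.eigenvectorBasis.repr u i) by ring]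
  rw [RCLike.conj_mul]
  rfl

private lemma qf_nonpos (h : A.IsHermitian) (u : EuclideanSpace ℂ (Fin n))
    (hu : u ∈ eigSpace h (fun x => x ≤ 0)) : qf h u ≤ 0 := by
  refine Finset.sum_nonpos fun i _ => ?_
  by_cases hi : h.eigenvalues i ≤ 0
  · nlinarith [sq_nonneg ‖h.eigenvectorBasis.repr u i‖]
  · rw [(mem_eigSpace_iff h _ u).1 hu i hi]; simp

private lemma qf_nonneg (h : A.IsHermitian) (u : EuclideanSpace ℂ (Fin n))
    (hu : u ∈ eigSpace h (fun x => 0 ≤ x)) : 0 ≤ qf h u := by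
  refine Finset.sum_nonneg fun i _ => ?_
  by_cases hi : 0 ≤ h.eigenvalues i
  · positivity
  · rw [(mem_eigSpace_iff h _ u).1 hu i hi]; simp

private lemma mem_eigSpace_zero_iff (h : A.IsHermitian) (u : EuclideanSpace ℂ (Fin n)) :
    u ∈ eigSpace h (fun x => x = 0) ↔ A *ᵥ (u : Fin n → ℂ) = 0 := by
  rw [mem_eigSpace_iff]
  constructor
  · intro hc
    have hz : h.eigenvectorBasis.repr (WithLp.toLp 2 (A *ᵥ u)) = 0 := by
      ext i
      rw [repr_mulVec']
      by_cases hi : h.eigenvalues i = 0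
      · simp [hi]
      · rw [hc i hi, mul_zero]; rfl
    exact congrArg WithLp.ofLp (h.eigenvectorBasis.repr.map_eq_zero_iff.1 hz)
  · intro hz i hi
    have := repr_mulVec' h u i
    rw [show WithLp.toLp 2 (A *ᵥ u) = 0 by rw [hz]; rfl, map_zero] at this
    have h0 : (0:ℂ) = (h.eigenvalues i : ℂ) * h.eigenvectorBasis.repr u i := this
    rcases mul_eq_zero.1 h0.symm with hl | hr
    · exact absurd (by exact_mod_cast hl) hi
    · exact hr

private lemma mulVec_eq_zero_of_nonpos (h : A.IsHermitian) (u : EuclideanSpace ℂ (Fin n))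
    (hu : u ∈ eigSpace h (fun x => x ≤ 0)) (hq : qf h u = 0) :
    u ∈ eigSpace h (fun x => x = 0) := by
  have hterm := (Finset.sum_eq_zero_iff_of_nonpos (fun i _ => by
    by_cases hi : h.eigenvalues i ≤ 0
    · nlinarith [sq_nonneg ‖h.eigenvectorBasis.repr u i‖]
    · rw [(mem_eigSpace_iff h _ u).1 hu i hi]; simp)).1 hq
  rw [mem_eigSpace_iff]
  intro i hi
  by_cases hle : h.eigenvalues i ≤ 0
  · have hlt : h.eigenvalues i < 0 := lt_of_le_of_ne hle hi
    have := hterm i (Finset.mem_univ i)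
    have hn : ‖h.eigenvectorBasis.repr u i‖ ^ 2 = 0 := by
      by_contra hcon
      exact absurd this (by
        have : ‖h.eigenvectorBasis.repr u i‖ ^ 2 > 0 :=
          lt_of_le_of_ne (sq_nonneg _) (Ne.symm hcon)
        nlinarith)
    simpa using pow_eq_zero_iff (n := 2) (by norm_num) |>.1 hn
  · exact (mem_eigSpace_iff h _ u).1 hu i hle

private lemma mulVec_eq_zero_of_nonneg (h : A.IsHermitian) (u : EuclideanSpace ℂ (Fin n))
    (hu : u ∈ eigSpace h (fun x => 0 ≤ x)) (hq : qf h u = 0) :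
    u ∈ eigSpace h (fun x => x = 0) := by
  have hterm := (Finset.sum_eq_zero_iff_of_nonneg (fun i _ => by
    by_cases hi : 0 ≤ h.eigenvalues i
    · positivity
    · rw [(mem_eigSpace_iff h _ u).1 hu i hi]; simp)).1 hq
  rw [mem_eigSpace_iff]
  intro i hi
  by_cases hle : 0 ≤ h.eigenvalues i
  · have hlt : 0 < h.eigenvalues i := lt_of_le_of_ne hle (Ne.symm hi)
    have := hterm i (Finset.mem_univ i)
    have hn : ‖h.eigenvectorBasis.repr u i‖ ^ 2 = 0 := by
      by_contra hcon
      exact absurd this (by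
        have : ‖h.eigenvectorBasis.repr u i‖ ^ 2 > 0 :=
          lt_of_le_of_ne (sq_nonneg _) (Ne.symm hcon)
        nlinarith)
    simpa using pow_eq_zero_iff (n := 2) (by norm_num) |>.1 hn
  · exact (mem_eigSpace_iff h _ u).1 hu i (fun h0 => hle h0.ge)

end KerAux

theorem ker_eq_of_neg_and_zero_counts {n : ℕ} (H₁ H₂ : Matrix (Fin n) (Fin n) ℂ)
    (h1 : H₁.IsHermitian) (h2 : H₂.IsHermitian)
    (hle : (H₂ - H₁).PosSemidef)
    (hneg : negCount H₁ = negCount H₂) (hzero : zeroCount H₁ = zeroCount H₂) :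
    ∀ v : Fin n → ℂ, H₁ *ᵥ v = 0 ↔ H₂ *ᵥ v = 0 := by
  classical
  unfold negCount at hneg
  unfold zeroCount at hzero
  rw [dif_pos h1, dif_pos h2] at hneg hzero
  set k := Fintype.card {i // h2.eigenvalues i < 0} with hk
  set z := Fintype.card {i // h2.eigenvalues i = 0} with hz
  set W : Submodule ℂ (EuclideanSpace ℂ (Fin n)) := eigSpace h2 (fun x => x ≤ 0) with hW
  set N : Submodule ℂ (EuclideanSpace ℂ (Fin n)) := eigSpace h1 (fun x => 0 ≤ x) with hN
  set K1 : Submodule ℂ (EuclideanSpace ℂ (Fin n)) := eigSpace h1 (fun x => x = 0) with hK1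
  set K2 : Submodule ℂ (EuclideanSpace ℂ (Fin n)) := eigSpace h2 (fun x => x = 0) with hK2
  -- dimensions
  have hWrank : Module.finrank ℂ W = k + z := by
    rw [hW, finrank_eigSpace h2 (fun x => x ≤ 0)]
    rw [Fintype.card_congr (Equiv.subtypeEquivRight
      (fun i => (le_iff_lt_or_eq : h2.eigenvalues i ≤ 0 ↔ _)))]
    exact Fintype.card_subtype_or_disjoint _ _
      (by rintro q hq1 hq2 i hi; exact absurd (hq2 i hi) (ne_of_lt (hq1 i hi)))
  have hNrank : Module.finrank ℂ N = n - k := by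
    rw [hN, finrank_eigSpace h1 (fun x => 0 ≤ x)]
    rw [Fintype.card_congr (Equiv.subtypeEquivRight
      (fun i => (not_lt : ¬ h1.eigenvalues i < 0 ↔ _).symm))]
    rw [Fintype.card_subtype_compl, Fintype.card_fin, hneg]
  have hK1rank : Module.finrank ℂ K1 = z := by
    rw [hK1, finrank_eigSpace h1 (fun x => x = 0), hzero]
  have hK2rank : Module.finrank ℂ K2 = z := by
    rw [hK2, finrank_eigSpace h2 (fun x => x = 0)]
  have hkle : k ≤ n := by
    rw [hk]
    exact (Fintype.card_subtype_le _).trans_eq (Fintype.card_fin n)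
  have hsum := Submodule.finrank_sup_add_finrank_inf_eq W N
  have hsuple : Module.finrank ℂ ↥(W ⊔ N) ≤ n :=
    (Submodule.finrank_le _).trans_eq (finrank_euclideanSpace_fin)
  have hinf : z ≤ Module.finrank ℂ ↥(W ⊓ N) := by omega
  -- the intersection is contained in both kernels
  have hsub1 : W ⊓ N ≤ K1 := by
    rintro u ⟨huW, huN⟩
    have hd := hle.dotProduct_mulVec_nonneg u
    rw [sub_mulVec, dotProduct_sub, ← qf_eq h2 u, ← qf_eq h1 u] at hd
    have hq12 : qf h1 u ≤ qf h2 u := by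
      have : (0:ℂ) ≤ ((qf h2 u - qf h1 u : ℝ) : ℂ) := by push_cast; exact hd
      have := Complex.zero_le_real.1 this
      linarith
    have hq1 : qf h1 u = 0 :=
      le_antisymm (hq12.trans (qf_nonpos h2 u huW)) (qf_nonneg h1 u huN)
    exact mulVec_eq_zero_of_nonneg h1 u huN hq1
  have hsub2 : W ⊓ N ≤ K2 := by
    rintro u ⟨huW, huN⟩
    have hd := hle.dotProduct_mulVec_nonneg u
    rw [sub_mulVec, dotProduct_sub, ← qf_eq h2 u, ← qf_eq h1 u] at hd
    have hq12 : qf h1 u ≤ qf h2 u := by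
      have : (0:ℂ) ≤ ((qf h2 u - qf h1 u : ℝ) : ℂ) := by push_cast; exact hd
      have := Complex.zero_le_real.1 this
      linarith
    have hq2' : qf h2 u = 0 :=
      le_antisymm (qf_nonpos h2 u huW) ((qf_nonneg h1 u huN).trans hq12)
    exact mulVec_eq_zero_of_nonpos h2 u huW hq2'
  have e1 : W ⊓ N = K1 :=
    Submodule.eq_of_le_of_finrank_le hsub1 (by rw [hK1rank]; exact hinf)
  have e2 : W ⊓ N = K2 :=
    Submodule.eq_of_le_of_finrank_le hsub2 (by rw [hK2rank]; exact hinf)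
  intro v
  have hv1 : H₁ *ᵥ v = 0 ↔ (WithLp.toLp 2 v) ∈ K1 :=
    (mem_eigSpace_zero_iff h1 (WithLp.toLp 2 v)).symm
  have hv2 : H₂ *ᵥ v = 0 ↔ (WithLp.toLp 2 v) ∈ K2 :=
    (mem_eigSpace_zero_iff h2 (WithLp.toLp 2 v)).symm
  rw [hv1, hv2, ← e1, ← e2]
end

section
/- Let H₁ and H₂ be Hermitian n×n complex matrices with H₁ ≤ H₂, and suppose H₂⁺ ≤ H₁⁺ where H⁺ denotes the Moore–Penrose inverse. Then H₁ and H₂ have the same inertia and ker H₁ = ker H₂. -/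
open Matrix ComplexOrder

/-- `X` is the Moore–Penrose inverse of `A`. -/
def IsMoorePenroseInverse {n : ℕ} (A X : Matrix (Fin n) (Fin n) ℂ) : Prop :=
  A * X * A = A ∧ X * A * X = X ∧ (A * X)ᴴ = A * X ∧ (X * A)ᴴ = X * A

namespace MPAux

open Module

variable {n : ℕ}

/-! ### Moore–Penrose algebra -/

lemma mp_symm {A X : Matrix (Fin n) (Fin n) ℂ} (h : IsMoorePenroseInverse A X) :
    IsMoorePenroseInverse X A := ⟨h.2.1, h.1, h.2.2.2, h.2.2.1⟩

lemma mp_unique {A X Y : Matrix (Fin n) (Fin n) ℂ} (hX : IsMoorePenroseInverse A X)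
    (hY : IsMoorePenroseInverse A Y) : X = Y := by
  obtain ⟨hX1, hX2, hX3, hX4⟩ := hX
  obtain ⟨hY1, hY2, hY3, hY4⟩ := hY
  have s2 : Aᴴ * (Yᴴ * Aᴴ) = Aᴴ := by
    have h := congrArg conjTranspose hY1
    rwa [conjTranspose_mul, conjTranspose_mul] at h
  have hAX : A * X = A * Y := by
    have s1 : A * X = Xᴴ * Aᴴ := by rw [← conjTranspose_mul, hX3]
    calc A * X = Xᴴ * Aᴴ := s1
    _ = Xᴴ * (Aᴴ * (Yᴴ * Aᴴ)) := by rw [s2]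
    _ = (Xᴴ * Aᴴ) * (Yᴴ * Aᴴ) := by rw [Matrix.mul_assoc]
    _ = (A * X) * (Yᴴ * Aᴴ) := by rw [← s1]
    _ = (A * X) * (A * Y)ᴴ := by rw [conjTranspose_mul]
    _ = (A * X) * (A * Y) := by rw [hY3]
    _ = ((A * X) * A) * Y := by rw [← Matrix.mul_assoc]
    _ = A * Y := by rw [hX1]
  have hXA : X * A = Y * A := by
    have s1 : X * A = Aᴴ * Xᴴ := by rw [← conjTranspose_mul, hX4]
    calc X * A = Aᴴ * Xᴴ := s1
    _ = (Aᴴ * (Yᴴ * Aᴴ)) * Xᴴ := by rw [s2]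
    _ = Aᴴ * (Yᴴ * (Aᴴ * Xᴴ)) := by rw [Matrix.mul_assoc, Matrix.mul_assoc]
    _ = Aᴴ * (Yᴴ * (X * A)) := by rw [← s1]
    _ = (Aᴴ * Yᴴ) * (X * A) := by rw [Matrix.mul_assoc]
    _ = (Y * A)ᴴ * (X * A) := by rw [conjTranspose_mul]
    _ = (Y * A) * (X * A) := by rw [hY4]
    _ = Y * (A * (X * A)) := by rw [Matrix.mul_assoc]
    _ = Y * ((A * X) * A) := by rw [Matrix.mul_assoc]
    _ = Y * A := by rw [hX1]
  calc X = X * A * X := hX2.symm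
  _ = X * (A * X) := by rw [Matrix.mul_assoc]
  _ = X * (A * Y) := by rw [hAX]
  _ = (X * A) * Y := by rw [Matrix.mul_assoc]
  _ = (Y * A) * Y := by rw [hXA]
  _ = Y := hY2

lemma mp_herm {A X : Matrix (Fin n) (Fin n) ℂ} (hA : A.IsHermitian)
    (h : IsMoorePenroseInverse A X) : X.IsHermitian := by
  obtain ⟨h1, h2, h3, h4⟩ := h
  have hXH : IsMoorePenroseInverse A Xᴴ := by
    refine ⟨?_, ?_, ?_, ?_⟩
    · calc A * Xᴴ * A = Aᴴ * Xᴴ * Aᴴ := by rw [hA.eq]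
      _ = (A * X * A)ᴴ := by rw [conjTranspose_mul, conjTranspose_mul, Matrix.mul_assoc]
      _ = Aᴴ := by rw [h1]
      _ = A := hA.eq
    · calc Xᴴ * A * Xᴴ = Xᴴ * Aᴴ * Xᴴ := by rw [hA.eq]
      _ = (X * A * X)ᴴ := by rw [conjTranspose_mul, conjTranspose_mul, Matrix.mul_assoc]
      _ = Xᴴ := by rw [h2]
    · calc (A * Xᴴ)ᴴ = X * Aᴴ := by rw [conjTranspose_mul, conjTranspose_conjTranspose]
      _ = X * A := by rw [hA.eq]
      _ = (X * A)ᴴ := h4.symm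
      _ = Aᴴ * Xᴴ := by rw [conjTranspose_mul]
      _ = A * Xᴴ := by rw [hA.eq]
    · calc (Xᴴ * A)ᴴ = Aᴴ * X := by rw [conjTranspose_mul, conjTranspose_conjTranspose]
      _ = A * X := by rw [hA.eq]
      _ = (A * X)ᴴ := h3.symm
      _ = Xᴴ * Aᴴ := by rw [conjTranspose_mul]
      _ = Xᴴ * A := by rw [hA.eq]
  exact (mp_unique hXH ⟨h1, h2, h3, h4⟩ : Xᴴ = X)

lemma mp_comm {A X : Matrix (Fin n) (Fin n) ℂ} (hA : A.IsHermitian)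
    (h : IsMoorePenroseInverse A X) : X * A = A * X := by
  have hX := mp_herm hA h
  calc X * A = (X * A)ᴴ := h.2.2.2.symm
  _ = Aᴴ * Xᴴ := by rw [conjTranspose_mul]
  _ = A * X := by rw [hA.eq, hX.eq]

lemma mp_eigen {A X : Matrix (Fin n) (Fin n) ℂ} (hA : A.IsHermitian)
    (h : IsMoorePenroseInverse A X) {u : Fin n → ℂ} {r : ℝ} (hu : A *ᵥ u = r • u)
    (hr : r ≠ 0) : X *ᵥ u = r⁻¹ • u := by
  have hcomm := mp_comm hA h
  have h1 : A *ᵥ (X *ᵥ u) = r • (X *ᵥ u) := by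
    rw [Matrix.mulVec_mulVec, ← hcomm, ← Matrix.mulVec_mulVec, hu, Matrix.mulVec_smul]
  have h2 : A *ᵥ (X *ᵥ u) = u := by
    have h3 : (A * X) *ᵥ (A *ᵥ u) = A *ᵥ u := by
      rw [Matrix.mulVec_mulVec, Matrix.mul_assoc, ← Matrix.mul_assoc, h.1]
    rw [hu, Matrix.mulVec_smul] at h3
    have h5 : (A * X) *ᵥ u = u := smul_right_injective _ hr h3
    rw [← Matrix.mulVec_mulVec] at h5
    exact h5
  have h6 : r • (X *ᵥ u) = u := by rw [← h1, h2]
  exact ((inv_smul_eq_iff₀ hr).mpr h6.symm).symm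

/-! ### quadratic forms -/

noncomputable def qf (A : Matrix (Fin n) (Fin n) ℂ) (x : Fin n → ℂ) : ℂ :=
  dotProduct (star x) (A *ᵥ x)

lemma dotProduct_sum' {ι : Type*} (s : Finset ι) (u : Fin n → ℂ) (f : ι → (Fin n → ℂ)) :
    u ⬝ᵥ (∑ i ∈ s, f i) = ∑ i ∈ s, u ⬝ᵥ f i := by
  simp only [dotProduct, Finset.sum_apply, Finset.mul_sum]
  exact Finset.sum_comm

lemma sum_dotProduct' {ι : Type*} (s : Finset ι) (u : Fin n → ℂ) (f : ι → (Fin n → ℂ)) :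
    (∑ i ∈ s, f i) ⬝ᵥ u = ∑ i ∈ s, f i ⬝ᵥ u := by
  simp only [dotProduct, Finset.sum_apply, Finset.sum_mul]
  exact Finset.sum_comm

lemma real_smul_pi (r : ℝ) (w : Fin n → ℂ) : r • w = (r : ℂ) • w := by
  funext k; simp [Pi.smul_apply, Complex.real_smul]

lemma dot_kill_left {A : Matrix (Fin n) (Fin n) ℂ} (hA : A.IsHermitian) {k : Fin n → ℂ}
    (hk : A *ᵥ k = 0) (w : Fin n → ℂ) : star k ⬝ᵥ (A *ᵥ w) = 0 := by
  rw [Matrix.dotProduct_mulVec]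
  have h : star k ᵥ* A = 0 := by
    have h2 := congrArg star hk
    rw [Matrix.star_mulVec, hA.eq] at h2
    simpa using h2
  rw [h, zero_dotProduct]

lemma qf_add_kernel {A : Matrix (Fin n) (Fin n) ℂ} (hA : A.IsHermitian) {k : Fin n → ℂ}
    (hk : A *ᵥ k = 0) (w : Fin n → ℂ) : qf A (w + k) = qf A w := by
  simp only [qf, Matrix.mulVec_add, star_add, add_dotProduct, dotProduct_add, hk,
    dotProduct_zero, dot_kill_left hA hk, add_zero]

lemma qf_kernel {A : Matrix (Fin n) (Fin n) ℂ} {k : Fin n → ℂ}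
    (hk : A *ᵥ k = 0) : qf A k = 0 := by
  simp [qf, hk]

lemma qf_mono {A B : Matrix (Fin n) (Fin n) ℂ} (h : (B - A).PosSemidef) (x : Fin n → ℂ) :
    qf A x ≤ qf B x := by
  have h2 := h.dotProduct_mulVec_nonneg x
  rw [Matrix.sub_mulVec, dotProduct_sub] at h2
  exact sub_nonneg.mp h2

/-! ### spectral subspaces -/

section spectral

variable {A : Matrix (Fin n) (Fin n) ℂ} (hA : A.IsHermitian)

/-- the eigenbasis as plain functions -/
noncomputable def eb (i : Fin n) : Fin n → ℂ := ⇑(hA.eigenvectorBasis i)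

lemma eb_dot (i j : Fin n) :
    star (eb hA i) ⬝ᵥ eb hA j = if i = j then 1 else 0 := by
  have h := hA.eigenvectorBasis.orthonormal
  rw [orthonormal_iff_ite] at h
  have h2 := h i j
  rwa [EuclideanSpace.inner_eq_star_dotProduct, dotProduct_comm] at h2

lemma eb_mulVec (i : Fin n) : A *ᵥ eb hA i = hA.eigenvalues i • eb hA i :=
  hA.mulVec_eigenvectorBasis i

lemma eb_li : LinearIndependent ℂ (eb hA) := by
  rw [Fintype.linearIndependent_iff]
  intro g hg i
  have h := congrArg (fun w => star (eb hA i) ⬝ᵥ w) hg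
  simp only [dotProduct_sum', dotProduct_smul, eb_dot, dotProduct_zero] at h
  rw [Finset.sum_eq_single i] at h
  · simpa using h
  · intro j _ hj
    simp [Ne.symm hj]
  · simp

/-- span of eigenvectors selected by `p` -/
noncomputable def V (p : Fin n → Prop) : Submodule ℂ (Fin n → ℂ) :=
  Submodule.span ℂ (Set.range fun i : {i // p i} => eb hA i.1)

lemma finrank_V (p : Fin n → Prop) [DecidablePred p] :
    finrank ℂ (V hA p) = Fintype.card {i // p i} := by
  rw [V]
  exact finrank_span_eq_card ((eb_li hA).comp _ Subtype.val_injective)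

lemma exists_repr {p : Fin n → Prop} [DecidablePred p] {x : Fin n → ℂ} (hx : x ∈ V hA p) :
    ∃ c : {i // p i} → ℂ, ∑ i, c i • eb hA i.1 = x := by
  rw [V] at hx
  exact (Submodule.mem_span_range_iff_exists_fun ℂ).mp hx

lemma qf_repr {B : Matrix (Fin n) (Fin n) ℂ} {μ : Fin n → ℝ} {p : Fin n → Prop}
    [DecidablePred p] (hB : ∀ i, p i → B *ᵥ eb hA i = μ i • eb hA i)
    (c : {i // p i} → ℂ) :
    qf B (∑ i, c i • eb hA i.1) =
      ((∑ i : {i // p i}, μ i.1 * Complex.normSq (c i) : ℝ) : ℂ) := by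
  classical
  set x := ∑ i, c i • eb hA i.1 with hx
  have hBx : B *ᵥ x = ∑ i : {i // p i}, c i • ((μ i.1 : ℂ) • eb hA i.1) := by
    rw [hx, show B *ᵥ (∑ i : {i // p i}, c i • eb hA i.1)
        = B.mulVecLin (∑ i : {i // p i}, c i • eb hA i.1) from rfl, map_sum]
    refine Finset.sum_congr rfl fun i _ => ?_
    rw [LinearMap.map_smul, Matrix.mulVecLin_apply, hB i.1 i.2, real_smul_pi]
  have hsx : star x = ∑ i : {i // p i}, (starRingEnd ℂ) (c i) • star (eb hA i.1) := by
    rw [hx, star_sum]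
    refine Finset.sum_congr rfl fun i _ => ?_
    rw [star_smul]
    rfl
  rw [qf, hBx, hsx, sum_dotProduct']
  have hterm : ∀ i : {i // p i},
      ((starRingEnd ℂ) (c i) • star (eb hA i.1)) ⬝ᵥ
        (∑ j : {j // p j}, c j • ((μ j.1 : ℂ) • eb hA j.1))
      = ((μ i.1 * Complex.normSq (c i) : ℝ) : ℂ) := by
    intro i
    rw [dotProduct_sum']
    rw [Finset.sum_eq_single i]
    · have hd : star (eb hA i.1) ⬝ᵥ eb hA i.1 = 1 := by rw [eb_dot]; simp
      rw [smul_dotProduct, dotProduct_smul, dotProduct_smul, hd]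
      push_cast [Complex.normSq_eq_conj_mul_self]
      simp only [smul_eq_mul, mul_one]
      ring
    · intro j _ hj
      rw [smul_dotProduct, dotProduct_smul, dotProduct_smul, eb_dot]
      have : ¬ (i.1 = j.1) := fun hh => hj.symm (Subtype.ext hh)
      simp [this]
    · simp
  rw [Finset.sum_congr rfl fun i _ => hterm i]
  norm_cast

lemma ne_zero_exists_coeff {p : Fin n → Prop} [DecidablePred p] {c : {i // p i} → ℂ}
    {x : Fin n → ℂ} (hc : ∑ i, c i • eb hA i.1 = x) (hx : x ≠ 0) : ∃ i, c i ≠ 0 := by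
  by_contra h
  push_neg at h
  apply hx
  rw [← hc]
  simp [h]

lemma qf_pos_on {B : Matrix (Fin n) (Fin n) ℂ} {μ : Fin n → ℝ} {p : Fin n → Prop}
    [DecidablePred p] (hB : ∀ i, p i → B *ᵥ eb hA i = μ i • eb hA i)
    (hμ : ∀ i, p i → 0 < μ i) {x : Fin n → ℂ} (hx : x ∈ V hA p) (hx0 : x ≠ 0) :
    0 < qf B x := by
  obtain ⟨c, hc⟩ := exists_repr hA hx
  obtain ⟨i0, hi0⟩ := ne_zero_exists_coeff hA hc hx0
  rw [← hc, qf_repr hA hB c, Complex.zero_lt_real]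
  refine Finset.sum_pos' (fun i _ => mul_nonneg (le_of_lt (hμ i.1 i.2)) (Complex.normSq_nonneg _))
    ⟨i0, Finset.mem_univ _, mul_pos (hμ i0.1 i0.2) ?_⟩
  simpa [Complex.normSq_pos] using hi0

lemma qf_neg_on {B : Matrix (Fin n) (Fin n) ℂ} {μ : Fin n → ℝ} {p : Fin n → Prop}
    [DecidablePred p] (hB : ∀ i, p i → B *ᵥ eb hA i = μ i • eb hA i)
    (hμ : ∀ i, p i → μ i < 0) {x : Fin n → ℂ} (hx : x ∈ V hA p) (hx0 : x ≠ 0) :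
    qf B x < 0 := by
  obtain ⟨c, hc⟩ := exists_repr hA hx
  obtain ⟨i0, hi0⟩ := ne_zero_exists_coeff hA hc hx0
  rw [← hc, qf_repr hA hB c, show (0:ℂ) = ((0:ℝ):ℂ) by norm_num, Complex.real_lt_real]
  refine neg_pos.mp ?_
  rw [← Finset.sum_neg_distrib]
  refine Finset.sum_pos' (fun i _ => ?_) ⟨i0, Finset.mem_univ _, ?_⟩
  · exact neg_nonneg.mpr (mul_nonpos_of_nonpos_of_nonneg (le_of_lt (hμ i.1 i.2))
      (Complex.normSq_nonneg _))
  · refine neg_pos.mpr (mul_neg_of_neg_of_pos (hμ i0.1 i0.2) ?_)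
    simpa [Complex.normSq_pos] using hi0

lemma qf_nonneg_on {B : Matrix (Fin n) (Fin n) ℂ} {μ : Fin n → ℝ} {p : Fin n → Prop}
    [DecidablePred p] (hB : ∀ i, p i → B *ᵥ eb hA i = μ i • eb hA i)
    (hμ : ∀ i, p i → 0 ≤ μ i) {x : Fin n → ℂ} (hx : x ∈ V hA p) :
    0 ≤ qf B x := by
  obtain ⟨c, hc⟩ := exists_repr hA hx
  rw [← hc, qf_repr hA hB c, Complex.zero_le_real]
  exact Finset.sum_nonneg fun i _ => mul_nonneg (hμ i.1 i.2) (Complex.normSq_nonneg _)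

lemma qf_nonpos_on {B : Matrix (Fin n) (Fin n) ℂ} {μ : Fin n → ℝ} {p : Fin n → Prop}
    [DecidablePred p] (hB : ∀ i, p i → B *ᵥ eb hA i = μ i • eb hA i)
    (hμ : ∀ i, p i → μ i ≤ 0) {x : Fin n → ℂ} (hx : x ∈ V hA p) :
    qf B x ≤ 0 := by
  obtain ⟨c, hc⟩ := exists_repr hA hx
  rw [← hc, qf_repr hA hB c, show (0:ℂ) = ((0:ℝ):ℂ) by norm_num, Complex.real_le_real]
  exact Finset.sum_nonpos fun i _ => mul_nonpos_of_nonpos_of_nonneg (hμ i.1 i.2)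
    (Complex.normSq_nonneg _)

lemma card_add_card_not (p : Fin n → Prop) [DecidablePred p] :
    Fintype.card {i // p i} + Fintype.card {i // ¬ p i} = n := by
  rw [Fintype.card_subtype, Fintype.card_subtype]
  simpa using Finset.card_filter_add_card_filter_not (s := Finset.univ) p

lemma disjoint_of_qf {W W' : Submodule ℂ (Fin n → ℂ)} {B : Matrix (Fin n) (Fin n) ℂ}
    (hW : ∀ x ∈ W, x ≠ 0 → 0 < qf B x) (hW' : ∀ x ∈ W', qf B x ≤ 0) :
    W ⊓ W' = ⊥ := by
  rw [eq_bot_iff]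
  rintro x ⟨hx1, hx2⟩
  by_contra hx0
  have h0 : x ≠ 0 := fun h => hx0 (h ▸ Submodule.zero_mem ⊥)
  exact absurd (lt_of_lt_of_le (hW x hx1 h0) (hW' x hx2)) (lt_irrefl _)

lemma finrank_add_le_of_disjoint {W W' : Submodule ℂ (Fin n → ℂ)} (h : W ⊓ W' = ⊥) :
    finrank ℂ W + finrank ℂ W' ≤ n := by
  have h2 := Submodule.finrank_sup_add_finrank_inf_eq W W'
  rw [h, finrank_bot, add_zero] at h2
  rw [← h2]
  have h3 := Submodule.finrank_le (W ⊔ W')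
  rwa [Module.finrank_fintype_fun_eq_card, Fintype.card_fin] at h3

lemma finrank_le_card_pos {W : Submodule ℂ (Fin n → ℂ)}
    (hW : ∀ x ∈ W, x ≠ 0 → 0 < qf A x) :
    finrank ℂ W ≤ Fintype.card {i // 0 < hA.eigenvalues i} := by
  classical
  set p := fun i => 0 < hA.eigenvalues i with hp
  have hnp : ∀ x ∈ V hA (fun i => ¬ p i), qf A x ≤ 0 :=
    fun x hx => qf_nonpos_on hA (fun i _ => eb_mulVec hA i) (fun i hi => le_of_not_gt hi) hx
  have hd := disjoint_of_qf hW hnp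
  have h1 := finrank_add_le_of_disjoint hd
  rw [finrank_V] at h1
  have h2 := card_add_card_not p
  have h4 : Fintype.card {i // p i} = Fintype.card {i // 0 < hA.eigenvalues i} :=
    Fintype.card_congr (Equiv.subtypeEquivRight (fun i => Iff.rfl))
  omega

lemma finrank_le_card_neg {W : Submodule ℂ (Fin n → ℂ)}
    (hW : ∀ x ∈ W, x ≠ 0 → qf A x < 0) :
    finrank ℂ W ≤ Fintype.card {i // hA.eigenvalues i < 0} := by
  classical
  set p := fun i => hA.eigenvalues i < 0 with hp
  have hnp : ∀ x ∈ V hA (fun i => ¬ p i), 0 ≤ qf A x :=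
    fun x hx => qf_nonneg_on hA (fun i _ => eb_mulVec hA i) (fun i hi => le_of_not_gt hi) hx
  have hd : W ⊓ V hA (fun i => ¬ p i) = ⊥ := by
    rw [eq_bot_iff]
    rintro x ⟨hx1, hx2⟩
    by_contra hx0
    have h0 : x ≠ 0 := fun h => hx0 (h ▸ Submodule.zero_mem ⊥)
    exact absurd (lt_of_le_of_lt (hnp x hx2) (hW x hx1 h0)) (lt_irrefl _)
  have h1 := finrank_add_le_of_disjoint hd
  rw [finrank_V] at h1
  have h2 := card_add_card_not p
  have h4 : Fintype.card {i // p i} = Fintype.card {i // hA.eigenvalues i < 0} :=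
    Fintype.card_congr (Equiv.subtypeEquivRight (fun i => Iff.rfl))
  omega

lemma finrank_le_card_nonpos {W : Submodule ℂ (Fin n → ℂ)}
    (hW : ∀ x ∈ W, qf A x ≤ 0) :
    finrank ℂ W ≤ Fintype.card {i // hA.eigenvalues i ≤ 0} := by
  classical
  set p := fun i => 0 < hA.eigenvalues i with hp
  have hpp : ∀ x ∈ V hA p, x ≠ 0 → 0 < qf A x :=
    fun x hx hx0 => qf_pos_on hA (fun i _ => eb_mulVec hA i) (fun i hi => hi) hx hx0
  have hd : V hA p ⊓ W = ⊥ := disjoint_of_qf hpp hW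
  have h1 := finrank_add_le_of_disjoint hd
  rw [finrank_V] at h1
  have h2 := card_add_card_not p
  have h3 : Fintype.card {i // ¬ p i} = Fintype.card {i // hA.eigenvalues i ≤ 0} :=
    Fintype.card_congr (Equiv.subtypeEquivRight (fun i => not_lt))
  omega

lemma span_eb_top : Submodule.span ℂ (Set.range (eb hA)) = ⊤ := by
  apply Submodule.eq_top_of_finrank_eq
  rw [finrank_span_eq_card (eb_li hA), Fintype.card_fin,
    Module.finrank_fintype_fun_eq_card, Fintype.card_fin]

lemma ker_eq_V : LinearMap.ker (Matrix.mulVecLin A) = V hA (fun i => hA.eigenvalues i = 0) := by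
  classical
  apply le_antisymm
  · intro x hx
    rw [LinearMap.mem_ker, Matrix.mulVecLin_apply] at hx
    have hxtop : x ∈ Submodule.span ℂ (Set.range (eb hA)) := by
      rw [span_eb_top hA]; trivial
    obtain ⟨c, hc⟩ := (Submodule.mem_span_range_iff_exists_fun ℂ).mp hxtop
    have hAx : ∑ i, (c i * (hA.eigenvalues i : ℂ)) • eb hA i = 0 := by
      calc ∑ i, (c i * (hA.eigenvalues i : ℂ)) • eb hA i
          = ∑ i, c i • ((hA.eigenvalues i : ℂ) • eb hA i) := by
            refine Finset.sum_congr rfl fun i _ => ?_; rw [smul_smul]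
      _ = A.mulVecLin (∑ i, c i • eb hA i) := by
            rw [map_sum]
            refine (Finset.sum_congr rfl fun i _ => ?_).symm
            rw [LinearMap.map_smul, Matrix.mulVecLin_apply, eb_mulVec hA i, real_smul_pi]
      _ = A *ᵥ x := by rw [hc, Matrix.mulVecLin_apply]
      _ = 0 := hx
    have hcoef : ∀ i, c i * (hA.eigenvalues i : ℂ) = 0 :=
      Fintype.linearIndependent_iff.mp (eb_li hA) _ hAx
    rw [← hc]
    apply Submodule.sum_mem
    intro i _
    by_cases hl : hA.eigenvalues i = 0
    · exact Submodule.smul_mem _ _ (Submodule.subset_span ⟨⟨i, hl⟩, rfl⟩)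
    · have hc0 : c i = 0 := by
        have hne : (hA.eigenvalues i : ℂ) ≠ 0 := by exact_mod_cast hl
        exact (mul_eq_zero.mp (hcoef i)).resolve_right hne
      rw [hc0, zero_smul]
      exact Submodule.zero_mem _
  · rw [V, Submodule.span_le]
    rintro y ⟨i, rfl⟩
    rw [SetLike.mem_coe, LinearMap.mem_ker, Matrix.mulVecLin_apply, eb_mulVec hA i.1, i.2]
    simp

lemma card_le_split :
    Fintype.card {i // hA.eigenvalues i ≤ 0}
      = Fintype.card {i // hA.eigenvalues i < 0} + Fintype.card {i // hA.eigenvalues i = 0} := by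
  classical
  rw [Fintype.card_subtype, Fintype.card_subtype, Fintype.card_subtype]
  have e : (Finset.univ.filter fun i => hA.eigenvalues i ≤ 0)
      = (Finset.univ.filter fun i => hA.eigenvalues i < 0)
        ∪ (Finset.univ.filter fun i => hA.eigenvalues i = 0) := by
    rw [← Finset.filter_or]
    apply Finset.filter_congr
    intro i _
    rw [le_iff_lt_or_eq]
  have hdis : Disjoint (Finset.univ.filter fun i => hA.eigenvalues i < 0)
      (Finset.univ.filter fun i => hA.eigenvalues i = 0) := by
    rw [Finset.disjoint_left]
    intro a ha hb
    rw [Finset.mem_filter] at ha hb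
    exact absurd hb.2 (ne_of_lt ha.2)
  rw [e, Finset.card_union_of_disjoint hdis]

lemma card_tri :
    Fintype.card {i // 0 < hA.eigenvalues i} + Fintype.card {i // hA.eigenvalues i < 0}
      + Fintype.card {i // hA.eigenvalues i = 0} = n := by
  classical
  have h1 := card_add_card_not (fun i => 0 < hA.eigenvalues i)
  have h2 : Fintype.card {i // ¬ 0 < hA.eigenvalues i}
      = Fintype.card {i // hA.eigenvalues i ≤ 0} :=
    Fintype.card_congr (Equiv.subtypeEquivRight (fun i => not_lt))
  have h3 := card_le_split hA
  omega

end spectral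

/-! ### count lemmas -/

lemma posCount_eq {A : Matrix (Fin n) (Fin n) ℂ} (hA : A.IsHermitian) :
    posCount A = Fintype.card {i // 0 < hA.eigenvalues i} := by
  rw [posCount, dif_pos hA]

lemma negCount_eq {A : Matrix (Fin n) (Fin n) ℂ} (hA : A.IsHermitian) :
    negCount A = Fintype.card {i // hA.eigenvalues i < 0} := by
  rw [negCount, dif_pos hA]

lemma zeroCount_eq {A : Matrix (Fin n) (Fin n) ℂ} (hA : A.IsHermitian) :
    zeroCount A = Fintype.card {i // hA.eigenvalues i = 0} := by
  rw [zeroCount, dif_pos hA]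

lemma count_sum {A : Matrix (Fin n) (Fin n) ℂ} (hA : A.IsHermitian) :
    posCount A + negCount A + zeroCount A = n := by
  rw [posCount_eq hA, negCount_eq hA, zeroCount_eq hA]
  exact card_tri hA

lemma posCount_le_of_psd {A B : Matrix (Fin n) (Fin n) ℂ} (hA : A.IsHermitian)
    (hB : B.IsHermitian) (h : (B - A).PosSemidef) : posCount A ≤ posCount B := by
  classical
  rw [posCount_eq hA, posCount_eq hB, ← finrank_V hA (fun i => 0 < hA.eigenvalues i)]
  apply finrank_le_card_pos hB
  intro x hx hx0
  exact lt_of_lt_of_le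
    (qf_pos_on hA (fun i _ => eb_mulVec hA i) (fun i hi => hi) hx hx0) (qf_mono h x)

lemma negCount_le_of_psd {A B : Matrix (Fin n) (Fin n) ℂ} (hA : A.IsHermitian)
    (hB : B.IsHermitian) (h : (B - A).PosSemidef) : negCount B ≤ negCount A := by
  classical
  rw [negCount_eq hA, negCount_eq hB, ← finrank_V hB (fun i => hB.eigenvalues i < 0)]
  apply finrank_le_card_neg hA
  intro x hx hx0
  exact lt_of_le_of_lt (qf_mono h x)
    (qf_neg_on hB (fun i _ => eb_mulVec hB i) (fun i hi => hi) hx hx0)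

lemma posCount_le_mp {A X : Matrix (Fin n) (Fin n) ℂ} (hA : A.IsHermitian)
    (hX : X.IsHermitian) (h : IsMoorePenroseInverse A X) : posCount A ≤ posCount X := by
  classical
  rw [posCount_eq hA, posCount_eq hX, ← finrank_V hA (fun i => 0 < hA.eigenvalues i)]
  apply finrank_le_card_pos hX
  intro x hx hx0
  exact qf_pos_on hA
    (fun i hi => mp_eigen hA h (eb_mulVec hA i) (ne_of_gt hi))
    (fun i hi => inv_pos.mpr hi) hx hx0

lemma negCount_le_mp {A X : Matrix (Fin n) (Fin n) ℂ} (hA : A.IsHermitian)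
    (hX : X.IsHermitian) (h : IsMoorePenroseInverse A X) : negCount A ≤ negCount X := by
  classical
  rw [negCount_eq hA, negCount_eq hX, ← finrank_V hA (fun i => hA.eigenvalues i < 0)]
  apply finrank_le_card_neg hX
  intro x hx hx0
  exact qf_neg_on hA
    (fun i hi => mp_eigen hA h (eb_mulVec hA i) (ne_of_lt hi))
    (fun i hi => inv_lt_zero.mpr hi) hx hx0

end MPAux

theorem mp_antitone_implies_inertia {n : ℕ} (H₁ H₂ P₁ P₂ : Matrix (Fin n) (Fin n) ℂ)
    (h1 : H₁.IsHermitian) (h2 : H₂.IsHermitian)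
    (hle : (H₂ - H₁).PosSemidef)
    (hP1 : IsMoorePenroseInverse H₁ P₁) (hP2 : IsMoorePenroseInverse H₂ P₂)
    (hPle : (P₁ - P₂).PosSemidef) :
    posCount H₁ = posCount H₂ ∧ negCount H₁ = negCount H₂ ∧
      zeroCount H₁ = zeroCount H₂ ∧
      ∀ v : Fin n → ℂ, H₁ *ᵥ v = 0 ↔ H₂ *ᵥ v = 0 := by
  classical
  have hp1 : P₁.IsHermitian := MPAux.mp_herm h1 hP1
  have hp2 : P₂.IsHermitian := MPAux.mp_herm h2 hP2
  -- positive counts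
  have hpos : posCount H₁ = posCount H₂ := by
    have a1 := MPAux.posCount_le_of_psd h1 h2 hle
    have a2 := MPAux.posCount_le_mp h2 hp2 hP2
    have a3 := MPAux.posCount_le_of_psd hp2 hp1 hPle
    have a4 := MPAux.posCount_le_mp hp1 h1 (MPAux.mp_symm hP1)
    omega
  have hneg : negCount H₁ = negCount H₂ := by
    have a1 := MPAux.negCount_le_of_psd h1 h2 hle
    have a2 := MPAux.negCount_le_mp h1 hp1 hP1
    have a3 := MPAux.negCount_le_of_psd hp2 hp1 hPle
    have a4 := MPAux.negCount_le_mp hp2 h2 (MPAux.mp_symm hP2)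
    omega
  have hzero : zeroCount H₁ = zeroCount H₂ := by
    have b1 := MPAux.count_sum h1
    have b2 := MPAux.count_sum h2
    omega
  refine ⟨hpos, hneg, hzero, ?_⟩
  -- kernels
  set K₁ := LinearMap.ker (Matrix.mulVecLin H₁) with hK₁
  set K₂ := LinearMap.ker (Matrix.mulVecLin H₂) with hK₂
  set N := MPAux.V h2 (fun i => h2.eigenvalues i < 0) with hN
  have hfinK₁ : Module.finrank ℂ K₁ = zeroCount H₁ := by
    rw [hK₁, MPAux.ker_eq_V h1, MPAux.finrank_V, MPAux.zeroCount_eq h1]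
  have hfinK₂ : Module.finrank ℂ K₂ = zeroCount H₂ := by
    rw [hK₂, MPAux.ker_eq_V h2, MPAux.finrank_V, MPAux.zeroCount_eq h2]
  have hfinN : Module.finrank ℂ N = negCount H₂ := by
    rw [hN, MPAux.finrank_V, MPAux.negCount_eq h2]
  -- disjointness of N and K₁ ⊔ K₂
  have hdisj : N ⊓ (K₁ ⊔ K₂) = ⊥ := by
    rw [eq_bot_iff]
    rintro x ⟨hxN, hxK⟩
    obtain ⟨k, hk, z, hz, hkz⟩ := Submodule.mem_sup.mp hxK
    rw [hK₁, LinearMap.mem_ker, Matrix.mulVecLin_apply] at hk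
    rw [hK₂, LinearMap.mem_ker, Matrix.mulVecLin_apply] at hz
    by_contra hx0
    have h0 : x ≠ 0 := fun h => hx0 (h ▸ Submodule.zero_mem ⊥)
    have hq2 : MPAux.qf H₂ x < 0 :=
      MPAux.qf_neg_on h2 (fun i _ => MPAux.eb_mulVec h2 i) (fun i hi => hi) hxN h0
    have hu : x - z = k := by rw [← hkz]; abel
    have hq1u : MPAux.qf H₁ (x - z) = 0 := by rw [hu]; exact MPAux.qf_kernel hk
    have hq2u : MPAux.qf H₂ (x - z) = MPAux.qf H₂ x := by
      rw [sub_eq_add_neg]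
      exact MPAux.qf_add_kernel h2 (by rw [Matrix.mulVec_neg, hz, neg_zero]) x
    have := MPAux.qf_mono hle (x - z)
    rw [hq1u, hq2u] at this
    exact absurd (lt_of_le_of_lt this hq2) (lt_irrefl _)
  -- qf H₁ nonpositive on N ⊔ (K₁ ⊔ K₂)
  have hbound : Module.finrank ℂ (N ⊔ (K₁ ⊔ K₂) : Submodule ℂ (Fin n → ℂ))
      ≤ Fintype.card {i // h1.eigenvalues i ≤ 0} := by
    apply MPAux.finrank_le_card_nonpos h1
    intro x hx
    obtain ⟨y, hy, w, hw, hyw⟩ := Submodule.mem_sup.mp hx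
    obtain ⟨k, hk, z, hz, hkz⟩ := Submodule.mem_sup.mp hw
    rw [hK₁, LinearMap.mem_ker, Matrix.mulVecLin_apply] at hk
    rw [hK₂, LinearMap.mem_ker, Matrix.mulVecLin_apply] at hz
    have hxe : x = (y + z) + k := by rw [← hyw, ← hkz]; abel
    rw [hxe, MPAux.qf_add_kernel h1 hk]
    refine le_trans (MPAux.qf_mono hle (y + z)) ?_
    rw [MPAux.qf_add_kernel h2 hz]
    exact MPAux.qf_nonpos_on h2 (fun i _ => MPAux.eb_mulVec h2 i)
      (fun i hi => le_of_lt hi) hy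
  -- dimension count
  have hsum : Module.finrank ℂ (N ⊔ (K₁ ⊔ K₂) : Submodule ℂ (Fin n → ℂ))
      = Module.finrank ℂ N + Module.finrank ℂ (K₁ ⊔ K₂ : Submodule ℂ (Fin n → ℂ)) := by
    have h := Submodule.finrank_sup_add_finrank_inf_eq N (K₁ ⊔ K₂)
    rw [hdisj, finrank_bot, add_zero] at h
    exact h
  have hcard : Fintype.card {i // h1.eigenvalues i ≤ 0} = negCount H₁ + zeroCount H₁ := by
    rw [MPAux.card_le_split h1, MPAux.negCount_eq h1, MPAux.zeroCount_eq h1]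
  have hK12 : Module.finrank ℂ (K₁ ⊔ K₂ : Submodule ℂ (Fin n → ℂ)) ≤ zeroCount H₁ := by
    omega
  have hKeq : K₁ ⊔ K₂ = K₁ := by
    have hle2 : K₁ ≤ K₁ ⊔ K₂ := le_sup_left
    have := Submodule.eq_of_le_of_finrank_le hle2 (by omega)
    exact this.symm
  have hK21 : K₂ = K₁ := by
    have hle3 : K₂ ≤ K₁ := by rw [← hKeq]; exact le_sup_right
    exact Submodule.eq_of_le_of_finrank_le hle3 (by omega)
  intro v
  constructor
  · intro hv
    have hvK : v ∈ K₁ := by rw [hK₁, LinearMap.mem_ker, Matrix.mulVecLin_apply]; exact hv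
    rw [← hK21] at hvK
    rwa [hK₂, LinearMap.mem_ker, Matrix.mulVecLin_apply] at hvK
  · intro hv
    have hvK : v ∈ K₂ := by rw [hK₂, LinearMap.mem_ker, Matrix.mulVecLin_apply]; exact hv
    rw [hK21] at hvK
    rwa [hK₁, LinearMap.mem_ker, Matrix.mulVecLin_apply] at hvK
end

section
/- Let H₁ and H₂ be Hermitian n×n complex matrices with H₁ ≤ H₂ and suppose H₁ is invertible with exactly the same number of negative eigenvalues as H₂ (both counted with multiplicity), and H₂ is invertible. Then for every ε > 0 small enough that H₁ - ε and H₂ - ε remain invertible with unchanged inertia, (H₂ - ε)⁻¹ ≤ (H₁ - ε)⁻¹. -/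
open Matrix ComplexOrder Module
set_option linter.unusedSectionVars false

namespace InertiaAux

variable {m : Type*} [Fintype m] [DecidableEq m]

noncomputable def negCard {A : Matrix m m ℂ} (hA : A.IsHermitian) : ℕ :=
  Fintype.card {i // hA.eigenvalues i < 0}

noncomputable def qf (A : Matrix m m ℂ) (x : m → ℂ) : ℝ := (star x ⬝ᵥ A *ᵥ x).re

lemma qf_zero (A : Matrix m m ℂ) : qf A 0 = 0 := by simp [qf]

def NegOn (A : Matrix m m ℂ) (W : Submodule ℂ (m → ℂ)) : Prop :=
  ∀ x ∈ W, x ≠ 0 → qf A x < 0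

def NonnegOn (A : Matrix m m ℂ) (W : Submodule ℂ (m → ℂ)) : Prop :=
  ∀ x ∈ W, 0 ≤ qf A x

lemma qf_mulVec_unitary {A : Matrix m m ℂ} (hA : A.IsHermitian) (y : m → ℂ) :
    qf A ((hA.eigenvectorUnitary : Matrix m m ℂ) *ᵥ y)
      = ∑ i, hA.eigenvalues i * Complex.normSq (y i) := by
  set U : Matrix m m ℂ := (hA.eigenvectorUnitary : Matrix m m ℂ) with hU
  have key : star (U *ᵥ y) ⬝ᵥ A *ᵥ (U *ᵥ y)
      = star y ⬝ᵥ (diagonal (RCLike.ofReal ∘ hA.eigenvalues)) *ᵥ y := by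
    have hD : star U * A * U = diagonal (RCLike.ofReal ∘ hA.eigenvalues) := by
      have := hA.conjStarAlgAut_star_eigenvectorUnitary
      rwa [Unitary.conjStarAlgAut_star_apply] at this
    rw [star_mulVec, mulVec_mulVec, dotProduct_mulVec, vecMul_vecMul, ← Matrix.mul_assoc,
      ← Matrix.star_eq_conjTranspose, ← hD, ← dotProduct_mulVec]
  have term : ∀ (c : ℝ) (z : ℂ), ((starRingEnd ℂ) z * (↑c * z)).re = c * Complex.normSq z := by
    intro c z
    rw [mul_left_comm, ← Complex.normSq_eq_conj_mul_self, ← Complex.ofReal_mul,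
      Complex.ofReal_re]
  rw [qf, key]
  simp only [dotProduct, mulVec_diagonal, Pi.star_apply, Function.comp_apply, RCLike.ofReal_alg]
  rw [Complex.re_sum]
  refine Finset.sum_congr rfl fun i _ => ?_
  simpa using term (hA.eigenvalues i) (y i)


/-- Extension by zero from a subtype, as a linear map. -/
noncomputable def extL (s : Set m) [DecidablePred (· ∈ s)] : (s → ℂ) →ₗ[ℂ] (m → ℂ) where
  toFun c i := if h : i ∈ s then c ⟨i, h⟩ else 0
  map_add' c d := by funext i; by_cases h : i ∈ s <;> simp [h]
  map_smul' a c := by funext i; by_cases h : i ∈ s <;> simp [h]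

lemma extL_apply_mem {s : Set m} [DecidablePred (· ∈ s)] (c : s → ℂ) {i : m} (h : i ∈ s) :
    extL s c i = c ⟨i, h⟩ := by simp [extL, h]

lemma extL_apply_not_mem {s : Set m} [DecidablePred (· ∈ s)] (c : s → ℂ) {i : m} (h : ¬ i ∈ s) :
    extL s c i = 0 := by simp [extL, h]

lemma extL_injective (s : Set m) [DecidablePred (· ∈ s)] : Function.Injective (extL s) := by
  intro c d h
  funext i
  have := congrFun h i.1
  rwa [extL_apply_mem c i.2, extL_apply_mem d i.2] at this

lemma mulVecLin_injective_of_isUnit {P : Matrix m m ℂ} (hP : IsUnit P) :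
    Function.Injective P.mulVecLin := by
  intro x y h
  simp only [mulVecLin_apply] at h
  have := congrArg (fun v => P⁻¹ *ᵥ v) h
  simpa [mulVec_mulVec, Matrix.nonsing_inv_mul P ((Matrix.isUnit_iff_isUnit_det P).mp hP)]
    using this


variable {A : Matrix m m ℂ}

lemma isUnit_eigenvectorUnitary (hA : A.IsHermitian) :
    IsUnit (hA.eigenvectorUnitary : Matrix m m ℂ) :=
  ⟨Unitary.toUnits hA.eigenvectorUnitary, rfl⟩

lemma term_nonpos {c : ℝ} (hc : c < 0) (z : ℂ) : c * Complex.normSq z ≤ 0 :=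
  mul_nonpos_iff.mpr (Or.inr ⟨le_of_lt hc, Complex.normSq_nonneg z⟩)

lemma exists_subspace (hA : A.IsHermitian) (s : Set m) [DecidablePred (· ∈ s)] :
    ∃ W : Submodule ℂ (m → ℂ), finrank ℂ W = Fintype.card s ∧
      ∀ x ∈ W, ∃ y : m → ℂ, (∀ i, i ∉ s → y i = 0) ∧
        qf A x = ∑ i, hA.eigenvalues i * Complex.normSq (y i) ∧ (x ≠ 0 → y ≠ 0) := by
  set U : Matrix m m ℂ := (hA.eigenvectorUnitary : Matrix m m ℂ)
  set f := (mulVecLin U).comp (extL s) with hf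
  have hfinj : Function.Injective f :=
    (mulVecLin_injective_of_isUnit (isUnit_eigenvectorUnitary hA)).comp (extL_injective s)
  refine ⟨LinearMap.range f, ?_, ?_⟩
  · rw [LinearMap.finrank_range_of_inj hfinj]
    simp [Module.finrank_fintype_fun_eq_card]
  · rintro x ⟨c, rfl⟩
    refine ⟨extL s c, fun i hi => extL_apply_not_mem c hi, ?_, ?_⟩
    · exact qf_mulVec_unitary hA (extL s c)
    · intro hx hy
      exact hx (by rw [hf, LinearMap.comp_apply, hy, map_zero])

lemma exists_negOn (hA : A.IsHermitian) :
    ∃ W : Submodule ℂ (m → ℂ), NegOn A W ∧ finrank ℂ W = negCard hA := by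
  classical
  obtain ⟨W, hrank, hW⟩ := exists_subspace hA {i | hA.eigenvalues i < 0}
  refine ⟨W, ?_, hrank.trans (Fintype.card_congr (Equiv.refl _))⟩
  intro x hx hx0
  obtain ⟨y, hsupp, hqf, hy0⟩ := hW x hx
  rw [hqf]
  have hy := hy0 hx0
  obtain ⟨j, hj⟩ := Function.ne_iff.mp hy
  have hjs : hA.eigenvalues j < 0 := by
    by_contra h
    exact hj (hsupp j h)
  calc ∑ i, hA.eigenvalues i * Complex.normSq (y i) < ∑ _i, (0:ℝ) := by
        refine Finset.sum_lt_sum (fun i _ => ?_) ⟨j, Finset.mem_univ j, ?_⟩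
        · by_cases hi : hA.eigenvalues i < 0
          · exact term_nonpos hi (y i)
          · rw [hsupp i hi]; simp
        · exact mul_neg_of_neg_of_pos hjs (Complex.normSq_pos.mpr hj)
    _ = 0 := by simp

lemma exists_nonnegOn (hA : A.IsHermitian) :
    ∃ W : Submodule ℂ (m → ℂ), NonnegOn A W ∧
      finrank ℂ W = Fintype.card {i // 0 ≤ hA.eigenvalues i} := by
  classical
  obtain ⟨W, hrank, hW⟩ := exists_subspace hA {i | 0 ≤ hA.eigenvalues i}
  refine ⟨W, ?_, hrank.trans (Fintype.card_congr (Equiv.refl _))⟩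
  intro x hx
  obtain ⟨y, hsupp, hqf, -⟩ := hW x hx
  rw [hqf]
  refine Finset.sum_nonneg fun i _ => ?_
  by_cases hi : 0 ≤ hA.eigenvalues i
  · exact mul_nonneg hi (Complex.normSq_nonneg _)
  · rw [hsupp i hi]; simp

lemma negOn_disjoint {W V : Submodule ℂ (m → ℂ)} (hW : NegOn A W) (hV : NonnegOn A V) :
    W ⊓ V = ⊥ := by
  rw [Submodule.eq_bot_iff]
  rintro x ⟨hxW, hxV⟩
  by_contra hx
  exact absurd (hV x hxV) (not_le.mpr (hW x hxW hx))

lemma finrank_add_finrank_le {W V : Submodule ℂ (m → ℂ)} (hW : NegOn A W) (hV : NonnegOn A V) :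
    finrank ℂ W + finrank ℂ V ≤ Fintype.card m := by
  have h := Submodule.finrank_sup_add_finrank_inf_eq W V
  rw [negOn_disjoint hW hV] at h
  simp only [finrank_bot, add_zero] at h
  rw [← h]
  exact (Submodule.finrank_le _).trans_eq (Module.finrank_fintype_fun_eq_card ℂ)

lemma card_nonneg_eigen (hA : A.IsHermitian) :
    negCard hA + Fintype.card {i // 0 ≤ hA.eigenvalues i} = Fintype.card m := by
  classical
  have : Fintype.card {i // 0 ≤ hA.eigenvalues i}
      = Fintype.card {i // ¬ hA.eigenvalues i < 0} :=
    Fintype.card_congr (Equiv.subtypeEquivRight (by simp [not_lt]))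
  rw [this, negCard, Fintype.card_subtype_compl]
  have := Fintype.card_subtype_le (fun i => hA.eigenvalues i < 0)
  omega

lemma NegOn.finrank_le {W : Submodule ℂ (m → ℂ)} (hA : A.IsHermitian) (hW : NegOn A W) :
    finrank ℂ W ≤ negCard hA := by
  obtain ⟨V, hV, hVrank⟩ := exists_nonnegOn hA
  have h := finrank_add_finrank_le hW hV
  have h2 := card_nonneg_eigen hA
  omega

lemma NonnegOn.negCard_le {V : Submodule ℂ (m → ℂ)} (hA : A.IsHermitian) (hV : NonnegOn A V) :
    negCard hA + finrank ℂ V ≤ Fintype.card m := by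
  obtain ⟨W, hW, hWrank⟩ := exists_negOn hA
  have h := finrank_add_finrank_le hW hV
  omega

lemma negCard_le_of_map {m' : Type*} [Fintype m'] [DecidableEq m'] {B : Matrix m' m' ℂ}
    (hA : A.IsHermitian) (hB : B.IsHermitian) (f : (m' → ℂ) →ₗ[ℂ] (m → ℂ))
    (hf : Function.Injective f) (hqf : ∀ x, qf B x = qf A (f x)) :
    negCard hB ≤ negCard hA := by
  obtain ⟨W, hW, hrank⟩ := exists_negOn hB
  have hW' : NegOn A (W.map f) := by
    rintro x ⟨y, hy, rfl⟩ hx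
    have hy0 : y ≠ 0 := by rintro rfl; exact hx (map_zero f)
    rw [← hqf]
    exact hW y hy hy0
  have h := NegOn.finrank_le hA hW'
  rwa [← (Submodule.equivMapOfInjective f hf W).finrank_eq, hrank] at h

lemma qf_conj (A P : Matrix m m ℂ) (x : m → ℂ) :
    qf (Pᴴ * A * P) x = qf A (P *ᵥ x) := by
  rw [qf, qf, ← mulVec_mulVec, ← mulVec_mulVec, dotProduct_mulVec, ← star_mulVec]

lemma negCard_conj (hA : A.IsHermitian) {P : Matrix m m ℂ} (hP : IsUnit P)
    (hc : (Pᴴ * A * P).IsHermitian) : negCard hc = negCard hA := by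
  have hPd : IsUnit P.det := (Matrix.isUnit_iff_isUnit_det P).mp hP
  have hPinv : IsUnit P⁻¹ :=
    ⟨⟨P⁻¹, P, Matrix.nonsing_inv_mul P hPd, Matrix.mul_nonsing_inv P hPd⟩, rfl⟩
  refine le_antisymm ?_ ?_
  · exact negCard_le_of_map hA hc (mulVecLin P) (mulVecLin_injective_of_isUnit hP)
      (fun x => qf_conj A P x)
  · refine negCard_le_of_map hc hA (mulVecLin P⁻¹) (mulVecLin_injective_of_isUnit hPinv)
      (fun x => ?_)
    rw [mulVecLin_apply, qf_conj, mulVec_mulVec, Matrix.mul_nonsing_inv P hPd, one_mulVec]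

lemma negCard_congr {B : Matrix m m ℂ} (hA : A.IsHermitian) (hB : B.IsHermitian)
    (h : A = B) : negCard hA = negCard hB := by subst h; rfl

section Blocks

variable {k : Type*} [Fintype k] [DecidableEq k]

noncomputable def inlL : (m → ℂ) →ₗ[ℂ] (m ⊕ k → ℂ) where
  toFun a := Sum.elim a (0 : k → ℂ)
  map_add' a b := by funext i; cases i <;> simp
  map_smul' c a := by funext i; cases i <;> simp

noncomputable def inrL : (k → ℂ) →ₗ[ℂ] (m ⊕ k → ℂ) where
  toFun b := Sum.elim (0 : m → ℂ) b
  map_add' a b := by funext i; cases i <;> simp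
  map_smul' c a := by funext i; cases i <;> simp

@[simp] lemma inlL_apply (a : m → ℂ) (i : m ⊕ k) : inlL a i = Sum.elim a (0 : k → ℂ) i := rfl
@[simp] lemma inrL_apply (b : k → ℂ) (i : m ⊕ k) : inrL b i = Sum.elim (0 : m → ℂ) b i := rfl

lemma star_sum_elim (a : m → ℂ) (b : k → ℂ) :
    star (Sum.elim a b) = Sum.elim (star a) (star b) := by
  funext i; cases i <;> rfl

lemma qf_fromBlocks (X : Matrix m m ℂ) (Y : Matrix k k ℂ) (v : m ⊕ k → ℂ) :
    qf (fromBlocks X 0 0 Y) v = qf X (v ∘ Sum.inl) + qf Y (v ∘ Sum.inr) := by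
  have hv : v = Sum.elim (v ∘ Sum.inl) (v ∘ Sum.inr) := by funext i; cases i <;> rfl
  rw [qf, qf, qf]
  conv_lhs => rw [hv]
  rw [fromBlocks_mulVec, star_sum_elim, sumElim_dotProduct_sumElim]
  simp only [Sum.elim_comp_inl, Sum.elim_comp_inr, zero_mulVec, add_zero, zero_add,
    Complex.add_re]

lemma sum_subspace (W₁ : Submodule ℂ (m → ℂ)) (W₂ : Submodule ℂ (k → ℂ)) :
    ∃ W : Submodule ℂ (m ⊕ k → ℂ), finrank ℂ W = finrank ℂ W₁ + finrank ℂ W₂ ∧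
      ∀ v ∈ W, v ∘ Sum.inl ∈ W₁ ∧ v ∘ Sum.inr ∈ W₂ := by
  have hinl : Function.Injective (inlL (m := m) (k := k)) := by
    intro a b h; funext i; exact congrFun h (Sum.inl i)
  have hinr : Function.Injective (inrL (m := m) (k := k)) := by
    intro a b h; funext i; exact congrFun h (Sum.inr i)
  refine ⟨W₁.map inlL ⊔ W₂.map inrL, ?_, ?_⟩
  · have hinf : W₁.map inlL ⊓ W₂.map inrL = ⊥ := by
      rw [Submodule.eq_bot_iff]
      rintro x ⟨⟨a, _, rfl⟩, ⟨b, _, hb⟩⟩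
      funext i
      cases i with
      | inl i => exact congrFun hb.symm (Sum.inl i)
      | inr i => rfl
    have h := Submodule.finrank_sup_add_finrank_inf_eq (W₁.map inlL) (W₂.map inrL)
    rw [hinf] at h
    simp only [finrank_bot, add_zero] at h
    rw [h, ← (Submodule.equivMapOfInjective _ hinl W₁).finrank_eq,
      ← (Submodule.equivMapOfInjective _ hinr W₂).finrank_eq]
  · intro v hv
    obtain ⟨x, hx, y, hy, rfl⟩ := Submodule.mem_sup.mp hv
    obtain ⟨a, ha, rfl⟩ := hx
    obtain ⟨b, hb, rfl⟩ := hy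
    constructor
    · have : (inlL a + inrL b) ∘ Sum.inl = a := by funext i; simp
      rwa [this]
    · have : (inlL a + inrL b) ∘ Sum.inr = b := by funext i; simp
      rwa [this]

lemma qf_nonpos_of_negOn {W : Submodule ℂ (m → ℂ)} (hW : NegOn A W) {x : m → ℂ}
    (hx : x ∈ W) : qf A x ≤ 0 := by
  by_cases h : x = 0
  · subst h; rw [qf_zero]
  · exact le_of_lt (hW x hx h)

lemma negCard_fromBlocks {X : Matrix m m ℂ} {Y : Matrix k k ℂ}
    (hX : X.IsHermitian) (hY : Y.IsHermitian)
    (hK : (fromBlocks X 0 0 Y).IsHermitian) :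
    negCard hK = negCard hX + negCard hY := by
  refine le_antisymm ?_ ?_
  · obtain ⟨V₁, hV₁, hr₁⟩ := exists_nonnegOn hX
    obtain ⟨V₂, hV₂, hr₂⟩ := exists_nonnegOn hY
    obtain ⟨V, hVrank, hVmem⟩ := sum_subspace V₁ V₂
    have hVnn : NonnegOn (fromBlocks X 0 0 Y) V := by
      intro v hv
      obtain ⟨hm1, hm2⟩ := hVmem v hv
      rw [qf_fromBlocks]
      exact add_nonneg (hV₁ _ hm1) (hV₂ _ hm2)
    have h := NonnegOn.negCard_le hK hVnn
    have e1 := card_nonneg_eigen hX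
    have e2 := card_nonneg_eigen hY
    rw [hVrank, hr₁, hr₂, Fintype.card_sum] at h
    omega
  · obtain ⟨W₁, hW₁, hr₁⟩ := exists_negOn hX
    obtain ⟨W₂, hW₂, hr₂⟩ := exists_negOn hY
    obtain ⟨W, hWrank, hWmem⟩ := sum_subspace W₁ W₂
    have hWneg : NegOn (fromBlocks X 0 0 Y) W := by
      intro v hv hv0
      obtain ⟨hm1, hm2⟩ := hWmem v hv
      rw [qf_fromBlocks]
      have hcase : v ∘ Sum.inl ≠ 0 ∨ v ∘ Sum.inr ≠ 0 := by
        by_contra h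
        push_neg at h
        refine hv0 ?_
        funext i
        cases i with
        | inl i => exact congrFun h.1 i
        | inr i => exact congrFun h.2 i
      rcases hcase with h | h
      · have := hW₁ _ hm1 h
        have h2 := qf_nonpos_of_negOn hW₂ hm2
        linarith
      · have := hW₂ _ hm2 h
        have h2 := qf_nonpos_of_negOn hW₁ hm1
        linarith
    have h := NegOn.finrank_le hK hWneg
    rw [hWrank, hr₁, hr₂] at h
    omega

end Blocks

lemma star_self_re_sum (x : m → ℂ) :
    (star x ⬝ᵥ x).re = ∑ i, Complex.normSq (x i) := by
  rw [dotProduct, Complex.re_sum]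
  refine Finset.sum_congr rfl fun i _ => ?_
  simp only [Pi.star_apply, RCLike.star_def]
  rw [mul_comm, Complex.mul_conj]
  simp

lemma sum_normSq_pos {x : m → ℂ} (hx : x ≠ 0) : 0 < ∑ i, Complex.normSq (x i) := by
  obtain ⟨j, hj⟩ := Function.ne_iff.mp hx
  refine Finset.sum_pos' (fun i _ => Complex.normSq_nonneg _) ⟨j, Finset.mem_univ j, ?_⟩
  exact Complex.normSq_pos.mpr hj

lemma negCard_negOne (h : (-1 : Matrix m m ℂ).IsHermitian) : negCard h = Fintype.card m := by
  have hneg : NegOn (-1 : Matrix m m ℂ) ⊤ := by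
    intro x _ hx
    have he : qf (-1 : Matrix m m ℂ) x = -∑ i, Complex.normSq (x i) := by
      rw [qf, Matrix.neg_mulVec, Matrix.one_mulVec, dotProduct_neg, Complex.neg_re,
        star_self_re_sum]
    rw [he, neg_lt, neg_zero]
    exact sum_normSq_pos hx
  have h1 := NegOn.finrank_le h hneg
  rw [finrank_top, Module.finrank_fintype_fun_eq_card] at h1
  have h2 : negCard h ≤ Fintype.card m := Fintype.card_subtype_le _
  omega

lemma eigenvalues_neg_of_negCard_eq (hA : A.IsHermitian)
    (h : negCard hA = Fintype.card m) (i : m) : hA.eigenvalues i < 0 := by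
  classical
  by_contra hi
  have hcompl : Fintype.card {j // ¬ hA.eigenvalues j < 0} = 0 := by
    rw [Fintype.card_subtype_compl]
    rw [negCard] at h
    omega
  exact (Fintype.card_eq_zero_iff.mp hcompl).elim ⟨i, hi⟩

lemma qf_neg_of_eigenvalues_neg (hA : A.IsHermitian)
    (h : ∀ i, hA.eigenvalues i < 0) {x : m → ℂ} (hx : x ≠ 0) : qf A x < 0 := by
  set U : Matrix m m ℂ := (hA.eigenvectorUnitary : Matrix m m ℂ) with hU
  have hUU : U * star U = 1 := Matrix.mem_unitaryGroup_iff.mp hA.eigenvectorUnitary.2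
  set y : m → ℂ := star U *ᵥ x with hy
  have hx' : x = U *ᵥ y := by
    rw [hy, mulVec_mulVec, hUU, Matrix.one_mulVec]
  have hy0 : y ≠ 0 := by
    rintro h0
    rw [h0, Matrix.mulVec_zero] at hx'
    exact hx hx'
  rw [hx', qf_mulVec_unitary hA y]
  obtain ⟨j, hj⟩ := Function.ne_iff.mp hy0
  calc ∑ i, hA.eigenvalues i * Complex.normSq (y i) < ∑ _i, (0:ℝ) := by
        refine Finset.sum_lt_sum (fun i _ => term_nonpos (h i) (y i))
          ⟨j, Finset.mem_univ j, ?_⟩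
        exact mul_neg_of_neg_of_pos (h j) (Complex.normSq_pos.mpr hj)
    _ = 0 := by simp

lemma qf_real (hA : A.IsHermitian) (x : m → ℂ) :
    star x ⬝ᵥ A *ᵥ x = (qf A x : ℂ) := by
  have h1 : star (star x ⬝ᵥ A *ᵥ x) = star x ⬝ᵥ Aᴴ *ᵥ x := by
    rw [star_dotProduct, star_star, star_mulVec, ← dotProduct_mulVec]
  rw [hA.eq] at h1
  have him : (star x ⬝ᵥ A *ᵥ x).im = 0 := by
    have := congrArg Complex.im h1
    simp only [RCLike.star_def, Complex.conj_im] at this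
    linarith
  rw [qf]
  exact Complex.ext (by simp) (by simp [him])

lemma posSemidef_of_qf (hA : A.IsHermitian) (h : ∀ x, 0 ≤ qf A x) : A.PosSemidef := by
  refine .of_dotProduct_mulVec_nonneg hA fun x => ?_
  rw [qf_real hA x]
  exact Complex.zero_le_real.mpr (h x)

lemma qf_neg (A : Matrix m m ℂ) (x : m → ℂ) : qf (-A) x = - qf A x := by
  rw [qf, qf, Matrix.neg_mulVec, dotProduct_neg, Complex.neg_re]

end InertiaAux


open scoped MatrixOrder in
lemma psd_sqrt_exists {N : ℕ} (X : Matrix (Fin N) (Fin N) ℂ) (h : X.PosSemidef) :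
    ∃ C : Matrix (Fin N) (Fin N) ℂ, C.PosSemidef ∧ C * C = X :=
  ⟨CFC.sqrt X, (CFC.sqrt_nonneg X).posSemidef, CFC.sqrt_mul_sqrt_self X h.nonneg⟩

lemma negCount_eq_s16 {N : ℕ} {X : Matrix (Fin N) (Fin N) ℂ} (hX : X.IsHermitian) :
    negCount X = InertiaAux.negCard hX := dif_pos hX

theorem shifted_antitonicity {n : ℕ} (H₁ H₂ : Matrix (Fin n) (Fin n) ℂ)
    (h1 : H₁.IsHermitian) (h2 : H₂.IsHermitian)
    (hu1 : IsUnit H₁) (hu2 : IsUnit H₂)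
    (hle : (H₂ - H₁).PosSemidef)
    (hneg : negCount H₁ = negCount H₂)
    (ε : ℝ) (hε : 0 < ε)
    (hu1e : IsUnit (H₁ - (ε : ℂ) • 1)) (hu2e : IsUnit (H₂ - (ε : ℂ) • 1))
    (hin1 : negCount (H₁ - (ε : ℂ) • 1) = negCount H₁ ∧
            posCount (H₁ - (ε : ℂ) • 1) = posCount H₁)
    (hin2 : negCount (H₂ - (ε : ℂ) • 1) = negCount H₂ ∧
            posCount (H₂ - (ε : ℂ) • 1) = posCount H₂) :
    ((H₁ - (ε : ℂ) • 1)⁻¹ - (H₂ - (ε : ℂ) • 1)⁻¹).PosSemidef := by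
  set A := H₁ - (ε : ℂ) • 1 with hAdef
  set B := H₂ - (ε : ℂ) • 1 with hBdef
  have hsm : ((ε : ℂ) • (1 : Matrix (Fin n) (Fin n) ℂ)).IsHermitian := by
    rw [Matrix.IsHermitian, conjTranspose_smul, conjTranspose_one, Complex.star_def,
      Complex.conj_ofReal]
  have hA : A.IsHermitian := h1.sub hsm
  have hB : B.IsHermitian := h2.sub hsm
  have hAd : IsUnit A.det := (Matrix.isUnit_iff_isUnit_det A).mp hu1e
  have hBd : IsUnit B.det := (Matrix.isUnit_iff_isUnit_det B).mp hu2e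
  have hBinv : B⁻¹ᴴ = B⁻¹ := by rw [conjTranspose_nonsing_inv, hB.eq]
  have hsame : InertiaAux.negCard hA = InertiaAux.negCard hB := by
    have e1 : negCount A = InertiaAux.negCard hA := negCount_eq_s16 hA
    have e2 : negCount B = InertiaAux.negCard hB := negCount_eq_s16 hB
    rw [← e1, ← e2, hin1.1, hin2.1, hneg]
  set C := Classical.choose (psd_sqrt_exists _ hle) with hCdef
  have hCps : C.PosSemidef := (Classical.choose_spec (psd_sqrt_exists _ hle)).1
  have hCH : Cᴴ = C := hCps.1
  have hCC : C * C = B - A := by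
    rw [hBdef, hAdef, sub_sub_sub_cancel_right]
    exact (Classical.choose_spec (psd_sqrt_exists _ hle)).2
  clear_value A B C
  set N : Matrix (Fin n) (Fin n) ℂ := 1 + C * A⁻¹ * C with hNdef
  have hNH : N.IsHermitian := by
    have h3 : (C * A⁻¹ * C).IsHermitian := by
      rw [Matrix.IsHermitian, conjTranspose_mul, conjTranspose_mul, hCH,
        conjTranspose_nonsing_inv, hA.eq, Matrix.mul_assoc]
    exact isHermitian_one.add h3
  have hmN : (-N).IsHermitian := hNH.neg
  have hm1 : (-1 : Matrix (Fin n) (Fin n) ℂ).IsHermitian := isHermitian_one.neg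
  set K := fromBlocks A C C (-1 : Matrix (Fin n) (Fin n) ℂ) with hKdef
  have hKH : K.IsHermitian := by
    rw [Matrix.IsHermitian, hKdef, fromBlocks_conjTranspose, hA.eq, hCH, hm1.eq]
  have hd1 : (fromBlocks A 0 0 (-N)).IsHermitian := by
    rw [Matrix.IsHermitian, fromBlocks_conjTranspose, conjTranspose_zero, hA.eq, hmN.eq]
  have hd2 : (fromBlocks B 0 0 (-1 : Matrix (Fin n) (Fin n) ℂ)).IsHermitian := by
    rw [Matrix.IsHermitian, fromBlocks_conjTranspose, conjTranspose_zero, hB.eq, hm1.eq]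
  set L := fromBlocks (1 : Matrix (Fin n) (Fin n) ℂ) (A⁻¹ * C) (0 : Matrix (Fin n) (Fin n) ℂ) (1 : Matrix (Fin n) (Fin n) ℂ) with hLdef
  have hLu : IsUnit L := by
    rw [Matrix.isUnit_iff_isUnit_det, hLdef, det_fromBlocks_zero₂₁]
    simp
  set M := fromBlocks (1 : Matrix (Fin n) (Fin n) ℂ) (0 : Matrix (Fin n) (Fin n) ℂ) (-C) (1 : Matrix (Fin n) (Fin n) ℂ) with hMdef
  have hMu : IsUnit M := by
    rw [Matrix.isUnit_iff_isUnit_det, hMdef, det_fromBlocks_zero₁₂]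
    simp
  clear_value N K L M
  have hE1 : Lᴴ * fromBlocks A 0 0 (-N) * L = K := by
    rw [hLdef, hKdef, fromBlocks_conjTranspose, fromBlocks_multiply, fromBlocks_multiply,
      conjTranspose_one, conjTranspose_zero, conjTranspose_mul, conjTranspose_nonsing_inv,
      hA.eq, hCH, fromBlocks_inj]
    refine ⟨by simp, by simp [Matrix.mul_nonsing_inv_cancel_left _ _ hAd], ?_, ?_⟩
    · simp [Matrix.mul_assoc, Matrix.nonsing_inv_mul A hAd]
    · rw [hNdef]
      simp only [Matrix.zero_mul, Matrix.mul_zero, Matrix.one_mul, Matrix.mul_one,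
        zero_add, add_zero, Matrix.mul_assoc, Matrix.nonsing_inv_mul A hAd]
      abel
  have hE2 : Mᴴ * fromBlocks B 0 0 (-1 : Matrix (Fin n) (Fin n) ℂ) * M = K := by
    rw [hMdef, hKdef, fromBlocks_conjTranspose, fromBlocks_multiply, fromBlocks_multiply,
      conjTranspose_one, conjTranspose_zero, conjTranspose_neg, hCH, fromBlocks_inj]
    refine ⟨?_, by simp, by simp, by simp⟩
    · simp only [Matrix.zero_mul, Matrix.mul_zero, Matrix.one_mul, Matrix.mul_one,
        zero_add, add_zero, Matrix.neg_mul, Matrix.mul_neg, neg_neg]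
      rw [hCC]
      abel
  have hc1 : (Lᴴ * fromBlocks A 0 0 (-N) * L).IsHermitian := hE1.symm ▸ hKH
  have hc2 : (Mᴴ * fromBlocks B 0 0 (-1 : Matrix (Fin n) (Fin n) ℂ) * M).IsHermitian :=
    hE2.symm ▸ hKH
  have chain1 : InertiaAux.negCard hKH = InertiaAux.negCard hd1 :=
    (InertiaAux.negCard_congr hKH hc1 hE1.symm).trans (InertiaAux.negCard_conj hd1 hLu hc1)
  have chain2 : InertiaAux.negCard hKH = InertiaAux.negCard hd2 :=
    (InertiaAux.negCard_congr hKH hc2 hE2.symm).trans (InertiaAux.negCard_conj hd2 hMu hc2)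
  have block1 : InertiaAux.negCard hd1 = InertiaAux.negCard hA + InertiaAux.negCard hmN :=
    InertiaAux.negCard_fromBlocks hA hmN hd1
  have block2 : InertiaAux.negCard hd2 = InertiaAux.negCard hB + InertiaAux.negCard hm1 :=
    InertiaAux.negCard_fromBlocks hB hm1 hd2
  have hm1card : InertiaAux.negCard hm1 = Fintype.card (Fin n) := InertiaAux.negCard_negOne hm1
  have hmNcard : InertiaAux.negCard hmN = Fintype.card (Fin n) := by omega
  have heigneg : ∀ i, hmN.eigenvalues i < 0 :=
    InertiaAux.eigenvalues_neg_of_negCard_eq hmN hmNcard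
  have hNpsd : N.PosSemidef := by
    refine InertiaAux.posSemidef_of_qf hNH fun x => ?_
    by_cases hx : x = 0
    · subst hx; rw [InertiaAux.qf_zero]
    · have hlt := InertiaAux.qf_neg_of_eigenvalues_neg hmN heigneg hx
      rw [InertiaAux.qf_neg] at hlt
      linarith
  -- the key algebraic identity
  have hCNC : C * N * C = (B - A) + (B - A) * A⁻¹ * (B - A) := by
    rw [hNdef, ← hCC]
    noncomm_ring
  have l1 : B * (A⁻¹ - B⁻¹) * B = B * A⁻¹ * B - B := by
    rw [Matrix.mul_sub, Matrix.mul_nonsing_inv B hBd, Matrix.sub_mul, Matrix.one_mul]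
  have l2 : (B - A) + (B - A) * A⁻¹ * (B - A) = B * A⁻¹ * B - B := by
    rw [Matrix.sub_mul, Matrix.mul_nonsing_inv A hAd, Matrix.mul_sub, Matrix.sub_mul,
      Matrix.one_mul, Matrix.sub_mul, Matrix.nonsing_inv_mul_cancel_right _ _ hAd,
      Matrix.one_mul]
    abel
  have hrec : B⁻¹ * (B * (A⁻¹ - B⁻¹) * B) * B⁻¹ = A⁻¹ - B⁻¹ := by
    rw [Matrix.mul_assoc B, Matrix.nonsing_inv_mul_cancel_left _ _ hBd,
      Matrix.mul_nonsing_inv_cancel_right _ _ hBd]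
  have key : A⁻¹ - B⁻¹ = B⁻¹ * (C * N * C) * B⁻¹ := by
    conv_lhs => rw [← hrec, l1, ← l2, ← hCNC]
  have hpsd1 : (C * N * C).PosSemidef := by
    have h0 := hNpsd.conjTranspose_mul_mul_same C
    rwa [hCH] at h0
  have hpsd2 := hpsd1.conjTranspose_mul_mul_same B⁻¹
  rw [hBinv] at hpsd2
  rw [key]
  exact hpsd2
end

section
/- Let H₁ and H₂ be Hermitian n×n complex matrices with H₁ ≤ H₂, let E₁ and E₂ be their spectral projections onto (-∞, 0), and suppose rank E₁ < ∞ (automatic here). Then the restriction of E₁ to the range of E₂ is injective. -/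
open Matrix ComplexOrder

local notation "⟪" x ", " y "⟫" => @inner ℂ _ _ x y

lemma quad_eq_s19 {n : ℕ} {A : Matrix (Fin n) (Fin n) ℂ} (hA : A.IsHermitian)
    (v : EuclideanSpace ℂ (Fin n)) :
    star ((WithLp.equiv 2 _) v) ⬝ᵥ (A *ᵥ (WithLp.equiv 2 _) v) =
      ∑ i, (hA.eigenvalues i : ℂ) * (‖hA.eigenvectorBasis.repr v i‖ : ℂ)^2 := by
  have h1 : star ((WithLp.equiv 2 _) v) ⬝ᵥ (A *ᵥ (WithLp.equiv 2 _) v)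
      = ⟪v, Matrix.toEuclideanLin A v⟫ := by
    rw [EuclideanSpace.inner_eq_star_dotProduct]
    simp [Matrix.toEuclideanLin_apply]
    exact dotProduct_comm _ _
  rw [h1]
  set b := hA.eigenvectorBasis with hb
  have hsym := (Matrix.isHermitian_iff_isSymmetric.1 hA)
  have hTb : ∀ i, Matrix.toEuclideanLin A (b i) = (hA.eigenvalues i : ℂ) • b i := by
    intro i
    have := hA.mulVec_eigenvectorBasis i
    apply (WithLp.equiv 2 _).injective
    simp only [Matrix.toEuclideanLin_apply]
    change A *ᵥ (b i).ofLp = _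
    show A *ᵥ _ = _
    rw [this]
    simp [hb]
  have hrepr : ∀ i, b.repr (Matrix.toEuclideanLin A v) i
      = (hA.eigenvalues i : ℂ) * b.repr v i := by
    intro i
    rw [b.repr_apply_apply, b.repr_apply_apply, ← hsym (b i) v, hTb i]
    rw [inner_smul_left]
    simp
  rw [← b.repr.inner_map_map v (Matrix.toEuclideanLin A v)]
  rw [PiLp.inner_apply]
  simp only [hrepr, RCLike.inner_apply]
  congr 1; ext i
  rw [mul_assoc, RCLike.mul_conj]
  rfl

theorem aux_spectral_inj {n : ℕ} (H₁ H₂ : Matrix (Fin n) (Fin n) ℂ)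
    (h1 : H₁.IsHermitian) (h2 : H₂.IsHermitian)
    (hle : (H₂ - H₁).PosSemidef)
    (v : EuclideanSpace ℂ (Fin n))
    (hv2 : v ∈ Submodule.span ℂ {w | ∃ i, h2.eigenvalues i < 0 ∧ w = h2.eigenvectorBasis i})
    (hv1 : Submodule.orthogonalProjectionOnto (Submodule.span ℂ {w | ∃ i, h1.eigenvalues i < 0 ∧ w = h1.eigenvectorBasis i}) v = 0) :
    v = 0 := by
  set b1 := h1.eigenvectorBasis with hb1
  set b2 := h2.eigenvectorBasis with hb2
  -- coefficients of v in b2 vanish off negative eigenvalues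
  have hd : ∀ i, ¬ (h2.eigenvalues i < 0) → b2.repr v i = 0 := by
    intro i hi
    have hmem : v ∈ LinearMap.ker ((innerSL ℂ (b2 i)).toLinearMap) := by
      refine Submodule.span_le.mpr ?_ hv2
      rintro w ⟨j, hj, rfl⟩
      have hij : i ≠ j := fun h => hi (h ▸ hj)
      simpa [LinearMap.mem_ker] using b2.orthonormal.2 hij
    rw [b2.repr_apply_apply]
    simpa [LinearMap.mem_ker] using hmem
  have hc : ∀ i, h1.eigenvalues i < 0 → b1.repr v i = 0 := by
    intro i hi
    have hperp := Submodule.orthogonalProjectionOnto_eq_zero_iff.mp hv1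
    have hbi : b1 i ∈ Submodule.span ℂ {w | ∃ i, h1.eigenvalues i < 0 ∧ w = h1.eigenvectorBasis i} :=
      Submodule.subset_span ⟨i, hi, rfl⟩
    rw [b1.repr_apply_apply]
    exact (Submodule.mem_orthogonal _ v).1 hperp _ hbi
  -- quadratic forms
  set Q1 : ℝ := ∑ i, h1.eigenvalues i * ‖b1.repr v i‖^2 with hQ1
  set Q2 : ℝ := ∑ i, h2.eigenvalues i * ‖b2.repr v i‖^2 with hQ2
  have key := hle.dotProduct_mulVec_nonneg ((WithLp.equiv 2 _) v)
  rw [Matrix.sub_mulVec, dotProduct_sub, quad_eq_s19 h1 v, quad_eq_s19 h2 v] at key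
  have hcast : ∀ (hA : ∀ i:Fin n, ℝ) (c : Fin n → ℂ),
      (∑ i, (hA i : ℂ) * (‖c i‖ : ℂ)^2) = ((∑ i, hA i * ‖c i‖^2 : ℝ) : ℂ) := by
    intro hA c; push_cast; ring
  rw [hcast, hcast] at key
  rw [← Complex.ofReal_sub] at key
  have hr : (0:ℝ) ≤ Q2 - Q1 := by
    rw [hQ1, hQ2]; exact_mod_cast key
  have hQ1nn : 0 ≤ Q1 := by
    apply Finset.sum_nonneg
    intro i _
    by_cases hi : h1.eigenvalues i < 0
    · simp [hc i hi]
    · exact mul_nonneg (not_lt.1 hi) (by positivity)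
  have hterm : ∀ i ∈ Finset.univ, h2.eigenvalues i * ‖b2.repr v i‖^2 ≤ 0 := by
    intro i _
    by_cases hi : h2.eigenvalues i < 0
    · exact mul_nonpos_of_nonpos_of_nonneg hi.le (by positivity)
    · simp [hd i hi]
  have hQ2z : Q2 = 0 := le_antisymm (Finset.sum_nonpos hterm) (by linarith)
  have hall := (Finset.sum_eq_zero_iff_of_nonpos hterm).1 hQ2z
  have hdz : ∀ i, b2.repr v i = 0 := by
    intro i
    by_cases hi : h2.eigenvalues i < 0
    · have := hall i (Finset.mem_univ i)
      have h2' : ‖b2.repr v i‖^2 = 0 := by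
        rcases mul_eq_zero.1 this with h | h
        · exact absurd h (ne_of_lt hi)
        · exact h
      simpa using pow_eq_zero_iff (n := 2) (by norm_num) |>.1 h2' |> norm_eq_zero.1
    · exact hd i hi
  have : b2.repr v = 0 := by
    ext i; exact hdz i
  simpa using b2.repr.map_eq_zero_iff.1 this

theorem spectral_projection_injective_on {n : ℕ} (H₁ H₂ : Matrix (Fin n) (Fin n) ℂ)
    (h1 : H₁.IsHermitian) (h2 : H₂.IsHermitian)
    (hle : (H₂ - H₁).PosSemidef)
    (v : EuclideanSpace ℂ (Fin n))
    (hv2 : v ∈ eigSpan h2 (fun t => t < 0))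
    (hv1 : Submodule.orthogonalProjectionOnto (eigSpan h1 (fun t => t < 0)) v = 0) :
    v = 0 := by
  unfold eigSpan at hv2 hv1
  exact aux_spectral_inj H₁ H₂ h1 h2 hle v hv2 hv1
end
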